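/- Let E ∈ ℂ^{n×n} be Hermitian, F, H ∈ ℂ^{m×n}, G ∈ ℂ^{m×m} Hermitian, q ∈ ℂⁿ, r ∈ ℂᵐ, and let û ∈ ℂⁿ, p̂ ∈ ℂᵐ. Fix positive weights α₁, α₂, α₃, α₄, β₁, β₂. Set Q = q − Eû − F*p̂, R = r − Hû − Gp̂, N₁ = J_S^n Φ_E D_{S,n}⁻¹, N₂ = J_SK^n Ψ_E D_{SK,n}⁻¹, S₁ = J_S^m Φ_G D_{S,m}⁻¹, S₂ = J_SK^m Ψ_G D_{SK,m}⁻¹. Define X̂₁ = [[α₁⁻¹(ℜ(û)ᵀ⊗Iₙ)N₁, −α₁⁻¹(ℑ(û)ᵀ⊗Iₙ)N₂, α₂⁻¹(Iₙ⊗ℜ(p̂)ᵀ)Σ_F, α₂⁻¹(Iₙ⊗ℑ(p̂)ᵀ)Σ_F],[α₁⁻¹(ℑ(û)ᵀ⊗Iₙ)N₁, α₁⁻¹(ℜ(û)ᵀ⊗Iₙ)N₂, α₂⁻¹(Iₙ⊗ℑ(p̂)ᵀ)Σ_F, −α₂⁻¹(Iₙ⊗ℜ(p̂)ᵀ)Σ_F]]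 ∈ ℝ^{2n×(n²+2mn)}, M̂₂ = [[α₃⁻¹(ℜ(û)ᵀ⊗I_m)Σ_H, −α₃⁻¹(ℑ(û)ᵀ⊗I_m)Σ_H, α₄⁻¹(ℜ(p̂)ᵀ⊗I_m)S₁, −α₄⁻¹(ℑ(p̂)ᵀ⊗I_m)S₂],[α₃⁻¹(ℑ(û)ᵀ⊗I_m)Σ_H, α₃⁻¹(ℜ(û)ᵀ⊗I_m)Σ_H, α₄⁻¹(ℑ(p̂)ᵀ⊗I_m)S₁, α₄⁻¹(ℜ(p̂)ᵀ⊗I_m)S₂]] ∈ ℝ^{2m×(2mn+m²)}, M₁ = [X̂₁, 0_{2n×(m²+2mn)}], M₂ = [0_{2m×(n²+2mn)}, M̂₂], I₁ = [−β₁⁻¹I_{2n}, 0_{2n×2m}], I₂ = [0_{2m×2n}, −β₂⁻¹I_{2m}], and M = [[M₁, I₁],[M₂, I₂]]. Then MMᵀ is invertible, and the sparsity-preserving structured backward error ξ^{G₃}_sps(û,p̂) := inf{ ζ^{σ₂}(ΔE⊙Θ_E, ΔF⊙Θ_F, ΔH⊙Θ_H, ΔG⊙Θ_G, Δq, Δr)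 : ΔE ∈ ℂ^{n×n} Hermitian, ΔF, ΔH ∈ ℂ^{m×n}, ΔG ∈ ℂ^{m×m} Hermitian, Δq ∈ ℂⁿ, Δr ∈ ℂᵐ, (E+ΔE⊙Θ_E)û + (F+ΔF⊙Θ_F)*p̂ = q+Δq and (H+ΔH⊙Θ_H)û + (G+ΔG⊙Θ_G)p̂ = r+Δr } is attained and equals ‖Mᵀ(MMᵀ)⁻¹[ℜ(Q); ℑ(Q); ℜ(R); ℑ(R)]‖₂. -/

import Mathlib

open Matrix

noncomputable section

namespace GSPPBE

/-- Entrywise real part of a complex matrix. -/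
def reM {I J : Type*} (A : Matrix I J ℂ) : Matrix I J ℝ := A.map Complex.re

/-- Entrywise imaginary part of a complex matrix. -/
def imM {I J : Type*} (A : Matrix I J ℂ) : Matrix I J ℝ := A.map Complex.im

/-- Entrywise real part of a complex vector. -/
def reV {I : Type*} (v : I → ℂ) : I → ℝ := fun i => (v i).re

/-- Entrywise imaginary part of a complex vector. -/
def imV {I : Type*} (v : I → ℂ) : I → ℝ := fun i => (v i).im

/-- Frobenius norm of a matrix. -/
def frob {I J α : Type*} [Fintype I] [Fintype J] [SeminormedAddGroup α]
    (A : Matrix I J α) : ℝ :=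
  Real.sqrt (∑ i, ∑ j, ‖A i j‖ ^ 2)

/-- Euclidean norm of a (finitely indexed) vector. -/
def eunorm {I α : Type*} [Fintype I] [SeminormedAddGroup α] (v : I → α) : ℝ :=
  Real.sqrt (∑ i, ‖v i‖ ^ 2)

/-- Column-major vectorization: `vecM A (j, i) = A i j`. -/
def vecM {I J α : Type*} (A : Matrix I J α) : J × I → α := fun p => A p.2 p.1

/-- Index type for the lower triangle including the diagonal (positions of `vec_S`);
it has `m(m+1)/2` elements. -/
abbrev SymIdx (m : ℕ) := {p : Fin m × Fin m // p.2 ≤ p.1}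

/-- Index type for the strictly lower triangle (positions of `vec_SK`);
it has `m(m-1)/2` elements. -/
abbrev SkewIdx (m : ℕ) := {p : Fin m × Fin m // p.2 < p.1}

/-- `vec_S` of a (symmetric) matrix: its lower-triangular entries `Z i j`, `j ≤ i`. -/
def vecS {m : ℕ} {α : Type*} (Z : Matrix (Fin m) (Fin m) α) : SymIdx m → α :=
  fun p => Z p.1.1 p.1.2

/-- `vec_SK` of a (skew-symmetric) matrix: its strictly lower-triangular entries `Z i j`, `j < i`. -/
def vecSK {m : ℕ} {α : Type*} (Z : Matrix (Fin m) (Fin m) α) : SkewIdx m → α :=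
  fun p => Z p.1.1 p.1.2

/-- `J_S^m`: its column at position `(i,j)`, `j ≤ i`, is `vec(eᵢeⱼᵀ + eⱼeᵢᵀ)` for `i > j` and
`vec(eⱼeⱼᵀ)` for `i = j`.  Rows are vec positions `(column, row)`. -/
def JS (m : ℕ) : Matrix (Fin m × Fin m) (SymIdx m) ℝ :=
  Matrix.of fun cr p =>
    (if cr.2 = p.1.1 ∧ cr.1 = p.1.2 then (1 : ℝ) else 0) +
    (if p.1.1 ≠ p.1.2 ∧ cr.2 = p.1.2 ∧ cr.1 = p.1.1 then 1 else 0)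

/-- `J_SK^m`: its column at position `(i,j)`, `j < i`, is `vec(eᵢeⱼᵀ − eⱼeᵢᵀ)`. -/
def JSK (m : ℕ) : Matrix (Fin m × Fin m) (SkewIdx m) ℝ :=
  Matrix.of fun cr p =>
    (if cr.2 = p.1.1 ∧ cr.1 = p.1.2 then (1 : ℝ) else 0) -
    (if cr.2 = p.1.2 ∧ cr.1 = p.1.1 then 1 else 0)

open Classical in
/-- Sign pattern `Θ_X` of a matrix, with values in the same ring. -/
def theta {I J α : Type*} [Zero α] [One α] (X : Matrix I J α) : Matrix I J α :=
  Matrix.of fun i j => if X i j = 0 then 0 else 1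

open Classical in
/-- Real-valued sign pattern `Θ_X` of a matrix. -/
def thetaR {I J α : Type*} [Zero α] (X : Matrix I J α) : Matrix I J ℝ :=
  Matrix.of fun i j => if X i j = 0 then 0 else 1

/-- `Φ_X = diag(vec_S(Θ_X))`. -/
def Phi {m : ℕ} {α : Type*} [Zero α] (X : Matrix (Fin m) (Fin m) α) :
    Matrix (SymIdx m) (SymIdx m) ℝ :=
  Matrix.diagonal (vecS (thetaR X))

/-- `Ψ_X`: diagonal matrix listing the strictly lower-triangular entries of `Θ_X`
in `vec_SK` ordering. -/
def Psi {m : ℕ} {α : Type*} [Zero α] (X : Matrix (Fin m) (Fin m) α) :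
    Matrix (SkewIdx m) (SkewIdx m) ℝ :=
  Matrix.diagonal (vecSK (thetaR X))

/-- `Σ_X = diag(vec(Θ_X))`. -/
def Sig {I J α : Type*} [DecidableEq I] [DecidableEq J] [Zero α]
    (X : Matrix I J α) : Matrix (J × I) (J × I) ℝ :=
  Matrix.diagonal (vecM (thetaR X))

/-- `D_{S,m}`: diagonal entry `1` at the positions of diagonal entries `(j,j)`, `√2` elsewhere. -/
def DS (m : ℕ) : Matrix (SymIdx m) (SymIdx m) ℝ :=
  Matrix.diagonal fun p => if p.1.1 = p.1.2 then 1 else Real.sqrt 2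

/-- `D_{SK,m} = √2·I`. -/
def DSK (m : ℕ) : Matrix (SkewIdx m) (SkewIdx m) ℝ :=
  Matrix.diagonal fun _ => Real.sqrt 2

/-- `uᵀ ⊗ I_b`, viewed as a matrix acting on column-major vectorizations of `b×a` matrices. -/
def rowKronId {a b : ℕ} (u : Fin a → ℝ) : Matrix (Fin b) (Fin a × Fin b) ℝ :=
  Matrix.of fun r p => u p.1 * (if r = p.2 then 1 else 0)

/-- `I_a ⊗ vᵀ`, viewed as a matrix acting on column-major vectorizations of `b×a` matrices. -/
def idKronRow {a b : ℕ} (v : Fin b → ℝ) : Matrix (Fin a) (Fin a × Fin b) ℝ :=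
  Matrix.of fun r p => (if r = p.1 then 1 else 0) * v p.2

/-- The weighted norm `ζ^{σ₁}(A,B,C,q,r)`. -/
def zeta1 {n m : ℕ} {α : Type*} [SeminormedAddGroup α]
    (α₁ α₂ α₃ β₁ β₂ : ℝ)
    (A : Matrix (Fin n) (Fin n) α) (B : Matrix (Fin m) (Fin n) α)
    (C : Matrix (Fin m) (Fin m) α) (q : Fin n → α) (r : Fin m → α) : ℝ :=
  Real.sqrt (α₁ ^ 2 * frob A ^ 2 + α₂ ^ 2 * frob B ^ 2 + α₃ ^ 2 * frob C ^ 2 +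
    β₁ ^ 2 * eunorm q ^ 2 + β₂ ^ 2 * eunorm r ^ 2)

/-- The weighted norm `ζ^{σ₂}(A,B,H,C,q,r)`. -/
def zeta2 {n m : ℕ} {α : Type*} [SeminormedAddGroup α]
    (α₁ α₂ α₃ α₄ β₁ β₂ : ℝ)
    (A : Matrix (Fin n) (Fin n) α) (B : Matrix (Fin m) (Fin n) α)
    (H : Matrix (Fin m) (Fin n) α) (C : Matrix (Fin m) (Fin m) α)
    (q : Fin n → α) (r : Fin m → α) : ℝ :=
  Real.sqrt (α₁ ^ 2 * frob A ^ 2 + α₂ ^ 2 * frob B ^ 2 + α₃ ^ 2 * frob H ^ 2 +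
    α₄ ^ 2 * frob C ^ 2 + β₁ ^ 2 * eunorm q ^ 2 + β₂ ^ 2 * eunorm r ^ 2)

section LeastNorm

variable {ρ κ : Type*} [Fintype ρ] [Fintype κ] [DecidableEq ρ]

lemma eunorm_sq_real (v : κ → ℝ) : eunorm v ^ 2 = ∑ i, v i ^ 2 := by
  rw [eunorm, Real.sq_sqrt (by positivity)]
  simp [Real.norm_eq_abs, sq_abs]

lemma eunorm_nonneg {I α : Type*} [Fintype I] [SeminormedAddGroup α] (v : I → α) :
    0 ≤ eunorm v := Real.sqrt_nonneg _

lemma eunorm_le_eunorm (u v : κ → ℝ) (h : ∑ i, u i ^ 2 ≤ ∑ i, v i ^ 2) :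
    eunorm u ≤ eunorm v := by
  rw [eunorm, eunorm]
  apply Real.sqrt_le_sqrt
  simpa [Real.norm_eq_abs, sq_abs] using h

lemma least_norm_solves (M : Matrix ρ κ ℝ) (hM : IsUnit (M * Mᵀ)) (w : ρ → ℝ) :
    M *ᵥ ((Mᵀ * (M * Mᵀ)⁻¹) *ᵥ w) = w := by
  rw [mulVec_mulVec, ← Matrix.mul_assoc,
    Matrix.mul_nonsing_inv _ ((Matrix.isUnit_iff_isUnit_det _).mp hM), Matrix.one_mulVec]

lemma least_norm_le (M : Matrix ρ κ ℝ) (hM : IsUnit (M * Mᵀ)) (w : ρ → ℝ)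
    (x : κ → ℝ) (hx : M *ᵥ x = w) :
    eunorm ((Mᵀ * (M * Mᵀ)⁻¹) *ᵥ w) ≤ eunorm x := by
  set xs := (Mᵀ * (M * Mᵀ)⁻¹) *ᵥ w with hxs
  have hsolve : M *ᵥ xs = w := least_norm_solves M hM w
  have horth : xs ⬝ᵥ (x - xs) = 0 := by
    have h1 : xs = ((M * Mᵀ)⁻¹ *ᵥ w) ᵥ* M := by
      rw [hxs, ← Matrix.mulVec_mulVec, Matrix.mulVec_transpose]
    have h2 : M *ᵥ (x - xs) = 0 := by
      rw [Matrix.mulVec_sub, hx, hsolve, sub_self]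
    nth_rewrite 1 [h1]
    rw [← Matrix.dotProduct_mulVec, h2, dotProduct_zero]
  apply eunorm_le_eunorm
  have hexp : ∑ i, x i ^ 2 =
      (∑ i, xs i ^ 2 + ∑ i, (x - xs) i ^ 2) + 2 * (xs ⬝ᵥ (x - xs)) := by
    rw [dotProduct, Finset.mul_sum, ← Finset.sum_add_distrib, ← Finset.sum_add_distrib]
    exact Finset.sum_congr rfl fun i _ => by simp [Pi.sub_apply]; ring
  nlinarith [Finset.sum_nonneg (fun i (_ : i ∈ Finset.univ) => sq_nonneg ((x - xs) i))]

lemma isUnit_mul_transpose_self (M : Matrix ρ κ ℝ)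
    (h : ∀ v : ρ → ℝ, Mᵀ *ᵥ v = 0 → v = 0) : IsUnit (M * Mᵀ) := by
  rw [← Matrix.mulVec_injective_iff_isUnit]
  intro u v huv
  have key : ∀ z : ρ → ℝ, (M * Mᵀ) *ᵥ z = 0 → z = 0 := by
    intro z hz
    apply h
    have h0 : (Mᵀ *ᵥ z) ⬝ᵥ (Mᵀ *ᵥ z) = 0 := by
      nth_rewrite 1 [Matrix.mulVec_transpose]
      rw [← Matrix.dotProduct_mulVec, Matrix.mulVec_mulVec, hz, dotProduct_zero]
    funext c
    have := (Finset.sum_eq_zero_iff_of_nonneg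
      (fun i (_ : i ∈ Finset.univ) => mul_self_nonneg ((Mᵀ *ᵥ z) i))).mp h0 c (Finset.mem_univ c)
    have : (Mᵀ *ᵥ z) c = 0 := by nlinarith [this]
    simpa using this
  have : (M * Mᵀ) *ᵥ (u - v) = 0 := by
    rw [Matrix.mulVec_sub, huv, sub_self]
  have := key _ this
  funext i
  have := congrFun this i
  simp [Pi.sub_apply, sub_eq_zero] at this
  exact this

end LeastNorm

section Tri

variable {N : ℕ}

lemma sum_split (f : Fin N × Fin N → ℝ) :
    ∑ p : Fin N × Fin N, f p
      = (∑ p : SymIdx N, f p.1) + ∑ p : SkewIdx N, f (p.1.2, p.1.1) := by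
  classical
  rw [← Finset.sum_filter_add_sum_filter_not Finset.univ (fun p : Fin N × Fin N => p.2 ≤ p.1) f]
  congr 1
  · exact Finset.sum_subtype _ (fun x => by simp) f
  · rw [← Finset.sum_subtype
      (Finset.univ.filter fun p : Fin N × Fin N => p.2 < p.1) (fun x => by simp)
      (fun p : Fin N × Fin N => f (p.2, p.1))]
    exact Finset.sum_nbij' (fun p : Fin N × Fin N => (p.2, p.1))
      (fun p : Fin N × Fin N => (p.2, p.1))
      (fun a ha => by simp at ha ⊢; omega)
      (fun a ha => by simp at ha ⊢; omega)
      (fun a _ => rfl) (fun a _ => rfl) (fun a _ => rfl)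

lemma sum_symIdx_strict (g : Fin N × Fin N → ℝ) :
    ∑ p : SymIdx N, (if p.1.2 < p.1.1 then g p.1 else 0)
      = ∑ p : SkewIdx N, g p.1 := by
  classical
  rw [← Finset.sum_subtype (Finset.univ.filter fun p : Fin N × Fin N => p.2 ≤ p.1)
      (fun x => by simp)
      (fun p : Fin N × Fin N => if p.2 < p.1 then g p else 0),
    ← Finset.sum_subtype (Finset.univ.filter fun p : Fin N × Fin N => p.2 < p.1)
      (fun x => by simp) g,
    ← Finset.sum_filter, Finset.filter_filter]
  apply Finset.sum_congr _ (fun _ _ => rfl)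
  apply Finset.filter_congr
  intro p _
  constructor
  · exact fun h => h.2
  · exact fun h => ⟨le_of_lt h, h⟩

end Tri

section VecLemmas

lemma JS_mulVec {n : ℕ} (A : Matrix (Fin n) (Fin n) ℝ) (hA : ∀ i j, A i j = A j i)
    (y : SymIdx n → ℝ) (hy : ∀ p : SymIdx n, y p = A p.1.1 p.1.2) :
    JS n *ᵥ y = vecM A := by
  classical
  funext q
  obtain ⟨j, i⟩ := q
  show ∑ p : SymIdx n, JS n (j, i) p * y p = A i j
  rcases le_or_gt j i with hji | hij
  · rw [Fintype.sum_eq_single (⟨(i, j), hji⟩ : SymIdx n)]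
    · have h1 : JS n (j, i) ⟨(i, j), hji⟩ = 1 := by
        simp [JS]; tauto
      rw [h1, hy]; simp
    · intro p hp
      obtain ⟨⟨pi, pj⟩, hple⟩ := p
      have h0 : JS n (j, i) ⟨(pi, pj), hple⟩ = 0 := by
        simp only [JS, Matrix.of_apply]
        rw [if_neg, if_neg]
        · norm_num
        · rintro ⟨h1, rfl, rfl⟩
          exact h1 (le_antisymm hji hple)
        · rintro ⟨rfl, rfl⟩
          exact hp rfl
      rw [h0, zero_mul]
  · rw [Fintype.sum_eq_single (⟨(j, i), hij.le⟩ : SymIdx n)]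
    · have h1 : JS n (j, i) ⟨(j, i), hij.le⟩ = 1 := by
        simp [JS, hij.ne, hij.ne']
      rw [h1, hy]
      simpa using (hA j i)
    · intro p hp
      obtain ⟨⟨pi, pj⟩, hple⟩ := p
      have h0 : JS n (j, i) ⟨(pi, pj), hple⟩ = 0 := by
        simp only [JS, Matrix.of_apply]
        rw [if_neg, if_neg]
        · norm_num
        · rintro ⟨h1, rfl, rfl⟩
          exact hp rfl
        · rintro ⟨rfl, rfl⟩
          exact absurd hple (not_le_of_gt hij)
      rw [h0, zero_mul]

lemma JSK_mulVec {n : ℕ} (A : Matrix (Fin n) (Fin n) ℝ) (hA : ∀ i j, A i j = - A j i)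
    (y : SkewIdx n → ℝ) (hy : ∀ p : SkewIdx n, y p = A p.1.1 p.1.2) :
    JSK n *ᵥ y = vecM A := by
  classical
  funext q
  obtain ⟨j, i⟩ := q
  show ∑ p : SkewIdx n, JSK n (j, i) p * y p = A i j
  rcases lt_trichotomy j i with hji | heq | hij
  · rw [Fintype.sum_eq_single (⟨(i, j), hji⟩ : SkewIdx n)]
    · have h1 : JSK n (j, i) ⟨(i, j), hji⟩ = 1 := by
        simp [JSK, hji.ne, hji.ne']
      rw [h1, hy]; simp
    · intro p hp
      obtain ⟨⟨pi, pj⟩, hplt⟩ := p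
      have h0 : JSK n (j, i) ⟨(pi, pj), hplt⟩ = 0 := by
        simp only [JSK, Matrix.of_apply]
        rw [if_neg, if_neg]
        · norm_num
        · rintro ⟨rfl, rfl⟩
          exact absurd hplt (not_lt_of_gt hji)
        · rintro ⟨rfl, rfl⟩
          exact hp rfl
      rw [h0, zero_mul]
  · subst heq
    have h0 : ∀ p : SkewIdx n, JSK n (j, j) p * y p = 0 := by
      rintro ⟨⟨pi, pj⟩, hplt⟩
      have : JSK n (j, j) ⟨(pi, pj), hplt⟩ = 0 := by
        simp only [JSK, Matrix.of_apply]
        rw [if_neg, if_neg]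
        · norm_num
        · rintro ⟨rfl, rfl⟩
          exact absurd hplt (lt_irrefl _)
        · rintro ⟨rfl, rfl⟩
          exact absurd hplt (lt_irrefl _)
      rw [this, zero_mul]
    rw [Finset.sum_eq_zero (fun p _ => h0 p)]
    have := hA j j
    show (0 : ℝ) = A j j
    linarith
  · rw [Fintype.sum_eq_single (⟨(j, i), hij⟩ : SkewIdx n)]
    · have h1 : JSK n (j, i) ⟨(j, i), hij⟩ = -1 := by
        simp [JSK, hij.ne, hij.ne']
      rw [h1, hy]
      have := hA i j
      show -1 * A j i = A i j
      linarith
    · intro p hp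
      obtain ⟨⟨pi, pj⟩, hplt⟩ := p
      have h0 : JSK n (j, i) ⟨(pi, pj), hplt⟩ = 0 := by
        simp only [JSK, Matrix.of_apply]
        rw [if_neg, if_neg]
        · norm_num
        · rintro ⟨rfl, rfl⟩
          exact hp rfl
        · rintro ⟨rfl, rfl⟩
          exact absurd hplt (not_lt_of_gt hij)
      rw [h0, zero_mul]

end VecLemmas

section VecLemmas2

lemma rowKronId_mulVec {a b : ℕ} (u : Fin a → ℝ) (A : Matrix (Fin b) (Fin a) ℝ) :
    rowKronId u *ᵥ vecM A = A *ᵥ u := by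
  funext r
  show ∑ p : Fin a × Fin b, rowKronId u r p * vecM A p = (A *ᵥ u) r
  rw [Fintype.sum_prod_type, Matrix.mulVec]
  simp only [rowKronId, Matrix.of_apply, vecM, mul_ite, mul_one, mul_zero, ite_mul, zero_mul,
    dotProduct]
  simp [mul_comm]

lemma idKronRow_mulVec {a b : ℕ} (v : Fin b → ℝ) (A : Matrix (Fin b) (Fin a) ℝ) :
    idKronRow v *ᵥ vecM A = Aᵀ *ᵥ v := by
  funext r
  show ∑ p : Fin a × Fin b, idKronRow v r p * vecM A p = (Aᵀ *ᵥ v) r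
  rw [Fintype.sum_prod_type, Matrix.mulVec]
  simp only [idKronRow, Matrix.of_apply, vecM, mul_ite, mul_one, mul_zero, ite_mul, zero_mul,
    one_mul, dotProduct, Matrix.transpose_apply]
  simp [mul_comm]

lemma Sig_mulVec {a b : ℕ} (X : Matrix (Fin b) (Fin a) ℂ) (x : Fin a × Fin b → ℝ)
    (B : Matrix (Fin b) (Fin a) ℝ)
    (h : ∀ i j, thetaR X i j * x (j, i) = B i j) :
    Sig X *ᵥ x = vecM B := by
  funext q
  obtain ⟨j, i⟩ := q
  show (Matrix.diagonal (vecM (thetaR X)) *ᵥ x) (j, i) = B i j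
  rw [Matrix.mulVec_diagonal]
  exact h i j

lemma sqrt_two_ne_zero : (Real.sqrt 2 : ℝ) ≠ 0 := by positivity

lemma DS_inv (n : ℕ) : (DS n)⁻¹
    = Matrix.diagonal (fun p : SymIdx n => (if p.1.1 = p.1.2 then (1:ℝ) else Real.sqrt 2)⁻¹) := by
  apply Matrix.inv_eq_right_inv
  rw [DS, Matrix.diagonal_mul_diagonal]
  ext i j
  by_cases hij : i = j
  · subst hij
    rw [Matrix.diagonal_apply_eq, Matrix.one_apply_eq]
    by_cases h : i.1.1 = i.1.2 <;> simp [h, mul_inv_cancel₀ sqrt_two_ne_zero]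
  · rw [Matrix.diagonal_apply_ne _ hij, Matrix.one_apply_ne hij]

lemma DSK_inv (n : ℕ) : (DSK n)⁻¹
    = Matrix.diagonal (fun _ : SkewIdx n => (Real.sqrt 2)⁻¹) := by
  apply Matrix.inv_eq_right_inv
  rw [DSK, Matrix.diagonal_mul_diagonal]
  ext i j
  by_cases hij : i = j
  · subst hij
    rw [Matrix.diagonal_apply_eq, Matrix.one_apply_eq]
    simp [mul_inv_cancel₀ sqrt_two_ne_zero]
  · rw [Matrix.diagonal_apply_ne _ hij, Matrix.one_apply_ne hij]

lemma N1_mulVec {n : ℕ} (E : Matrix (Fin n) (Fin n) ℂ) (x : SymIdx n → ℝ)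
    (A : Matrix (Fin n) (Fin n) ℝ) (hA : ∀ i j, A i j = A j i)
    (h : ∀ p : SymIdx n, thetaR E p.1.1 p.1.2 * x p
        = (if p.1.1 = p.1.2 then 1 else Real.sqrt 2) * A p.1.1 p.1.2) :
    (JS n * Phi E * (DS n)⁻¹) *ᵥ x = vecM A := by
  rw [← Matrix.mulVec_mulVec, ← Matrix.mulVec_mulVec]
  rw [DS_inv]
  apply JS_mulVec A hA
  intro p
  rw [Phi, Matrix.mulVec_diagonal, Matrix.mulVec_diagonal]
  have hd : (if p.1.1 = p.1.2 then (1:ℝ) else Real.sqrt 2) ≠ 0 := by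
    by_cases hc : p.1.1 = p.1.2 <;> simp [hc, sqrt_two_ne_zero]
  show vecS (thetaR E) p * ((if p.1.1 = p.1.2 then (1:ℝ) else Real.sqrt 2)⁻¹ * x p)
      = A p.1.1 p.1.2
  have hth : vecS (thetaR E) p * ((if p.1.1 = p.1.2 then (1:ℝ) else Real.sqrt 2)⁻¹ * x p)
      = (if p.1.1 = p.1.2 then (1:ℝ) else Real.sqrt 2)⁻¹ * (thetaR E p.1.1 p.1.2 * x p) := by
    rw [vecS]; ring
  rw [hth, h p, ← mul_assoc, inv_mul_cancel₀ hd, one_mul]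

lemma N2_mulVec {n : ℕ} (E : Matrix (Fin n) (Fin n) ℂ) (x : SkewIdx n → ℝ)
    (A : Matrix (Fin n) (Fin n) ℝ) (hA : ∀ i j, A i j = - A j i)
    (h : ∀ p : SkewIdx n, thetaR E p.1.1 p.1.2 * x p = Real.sqrt 2 * A p.1.1 p.1.2) :
    (JSK n * Psi E * (DSK n)⁻¹) *ᵥ x = vecM A := by
  rw [← Matrix.mulVec_mulVec, ← Matrix.mulVec_mulVec]
  rw [DSK_inv]
  apply JSK_mulVec A hA
  intro p
  rw [Psi, Matrix.mulVec_diagonal, Matrix.mulVec_diagonal]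
  have hth : vecSK (thetaR E) p * ((Real.sqrt 2)⁻¹ * x p)
      = (Real.sqrt 2)⁻¹ * (thetaR E p.1.1 p.1.2 * x p) := by
    rw [vecSK]; ring
  rw [hth, h p, ← mul_assoc, inv_mul_cancel₀ sqrt_two_ne_zero, one_mul]

end VecLemmas2

section Complexify

variable {I J : Type*} [Fintype I] [Fintype J]

lemma reV_mulVec (A : Matrix I J ℂ) (v : J → ℂ) :
    reV (A *ᵥ v) = reM A *ᵥ reV v - imM A *ᵥ imV v := by
  funext i
  simp only [reV, Matrix.mulVec, dotProduct, Pi.sub_apply, reM, imM, imV, Matrix.map_apply,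
    Complex.re_sum, Complex.mul_re, ← Finset.sum_sub_distrib]

lemma imV_mulVec (A : Matrix I J ℂ) (v : J → ℂ) :
    imV (A *ᵥ v) = reM A *ᵥ imV v + imM A *ᵥ reV v := by
  funext i
  simp only [imV, Matrix.mulVec, dotProduct, Pi.add_apply, reM, imM, reV, Matrix.map_apply,
    Complex.im_sum, Complex.mul_im, ← Finset.sum_add_distrib]

lemma reM_conjTranspose (A : Matrix I J ℂ) : reM (Aᴴ) = (reM A)ᵀ := by
  funext i j; simp [reM, Matrix.conjTranspose_apply]

lemma imM_conjTranspose (A : Matrix I J ℂ) : imM (Aᴴ) = -(imM A)ᵀ := by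
  funext i j; simp [imM, Matrix.conjTranspose_apply]

lemma cvec_eq_iff (f g : I → ℂ) : f = g ↔ reV f = reV g ∧ imV f = imV g := by
  constructor
  · rintro rfl; exact ⟨rfl, rfl⟩
  · rintro ⟨h1, h2⟩
    funext i
    exact Complex.ext (congrFun h1 i) (congrFun h2 i)

end Complexify

section BigBlock

/-- Column index type of the pattern part. -/
abbrev KIdx (n m : ℕ) :=
  ((SymIdx n ⊕ SkewIdx n) ⊕ ((Fin n × Fin m) ⊕ (Fin n × Fin m))) ⊕
    (((Fin n × Fin m) ⊕ (Fin n × Fin m)) ⊕ (SymIdx m ⊕ SkewIdx m))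

/-- Row index type. -/
abbrev LIdx (n m : ℕ) := (Fin n ⊕ Fin n) ⊕ (Fin m ⊕ Fin m)

variable {n m : ℕ}

def bigM (E : Matrix (Fin n) (Fin n) ℂ) (F H : Matrix (Fin m) (Fin n) ℂ)
    (G : Matrix (Fin m) (Fin m) ℂ) (uh : Fin n → ℂ) (ph : Fin m → ℂ)
    (α₁ α₂ α₃ α₄ β₁ β₂ : ℝ) : Matrix (LIdx n m) (KIdx n m ⊕ LIdx n m) ℝ :=
  fromBlocks
    (fromCols
      (fromRows
        (fromCols
          (fromCols (α₁⁻¹ • (rowKronId (reV uh) * (JS n * Phi E * (DS n)⁻¹)))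
            ((-(α₁⁻¹)) • (rowKronId (imV uh) * (JSK n * Psi E * (DSK n)⁻¹))))
          (fromCols (α₂⁻¹ • (idKronRow (reV ph) * Sig F))
            (α₂⁻¹ • (idKronRow (imV ph) * Sig F))))
        (fromCols
          (fromCols (α₁⁻¹ • (rowKronId (imV uh) * (JS n * Phi E * (DS n)⁻¹)))
            (α₁⁻¹ • (rowKronId (reV uh) * (JSK n * Psi E * (DSK n)⁻¹))))
          (fromCols (α₂⁻¹ • (idKronRow (imV ph) * Sig F))
            ((-(α₂⁻¹)) • (idKronRow (reV ph) * Sig F)))))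
      0)
    (fromCols ((-(β₁⁻¹)) • (1 : Matrix (Fin n ⊕ Fin n) (Fin n ⊕ Fin n) ℝ)) 0)
    (fromCols 0
      (fromRows
        (fromCols
          (fromCols (α₃⁻¹ • (rowKronId (reV uh) * Sig H))
            ((-(α₃⁻¹)) • (rowKronId (imV uh) * Sig H)))
          (fromCols (α₄⁻¹ • (rowKronId (reV ph) * (JS m * Phi G * (DS m)⁻¹)))
            ((-(α₄⁻¹)) • (rowKronId (imV ph) * (JSK m * Psi G * (DSK m)⁻¹)))))
        (fromCols
          (fromCols (α₃⁻¹ • (rowKronId (imV uh) * Sig H))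
            (α₃⁻¹ • (rowKronId (reV uh) * Sig H)))
          (fromCols (α₄⁻¹ • (rowKronId (imV ph) * (JS m * Phi G * (DS m)⁻¹)))
            (α₄⁻¹ • (rowKronId (reV ph) * (JSK m * Psi G * (DSK m)⁻¹)))))))
    (fromCols 0 ((-(β₂⁻¹)) • (1 : Matrix (Fin m ⊕ Fin m) (Fin m ⊕ Fin m) ℝ)))

variable (E : Matrix (Fin n) (Fin n) ℂ) (F H : Matrix (Fin m) (Fin n) ℂ)
  (G : Matrix (Fin m) (Fin m) ℂ) (uh : Fin n → ℂ) (ph : Fin m → ℂ)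
  (α₁ α₂ α₃ α₄ β₁ β₂ : ℝ)

lemma cstar_mul_mulVec {l k j : Type*} [Fintype k] [Fintype j] (A : Matrix l k ℝ)
    (B : Matrix k j ℝ) (v : j → ℝ) :
    (@HMul.hMul (Matrix l k ℝ) (Matrix k j ℝ) (Matrix l j ℝ)
      CStarMatrix.instHMulOfFintypeOfMulOfAddCommMonoid A B) *ᵥ v
      = A *ᵥ (B *ᵥ v) :=
  (Matrix.mulVec_mulVec v A B).symm

lemma bigM_mulVec
    (xE1 : SymIdx n → ℝ) (xE2 : SkewIdx n → ℝ) (xF1 xF2 xH1 xH2 : Fin n × Fin m → ℝ)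
    (xG1 : SymIdx m → ℝ) (xG2 : SkewIdx m → ℝ)
    (xq1 xq2 : Fin n → ℝ) (xr1 xr2 : Fin m → ℝ)
    (AE BE : Matrix (Fin n) (Fin n) ℝ) (AF BF AH BH : Matrix (Fin m) (Fin n) ℝ)
    (AG BG : Matrix (Fin m) (Fin m) ℝ)
    (hAE : (JS n * Phi E * (DS n)⁻¹) *ᵥ xE1 = vecM AE)
    (hBE : (JSK n * Psi E * (DSK n)⁻¹) *ᵥ xE2 = vecM BE)
    (hAF : Sig F *ᵥ xF1 = vecM AF) (hBF : Sig F *ᵥ xF2 = vecM BF)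
    (hAH : Sig H *ᵥ xH1 = vecM AH) (hBH : Sig H *ᵥ xH2 = vecM BH)
    (hAG : (JS m * Phi G * (DS m)⁻¹) *ᵥ xG1 = vecM AG)
    (hBG : (JSK m * Psi G * (DSK m)⁻¹) *ᵥ xG2 = vecM BG) :
    bigM E F H G uh ph α₁ α₂ α₃ α₄ β₁ β₂ *ᵥ
      Sum.elim (Sum.elim (Sum.elim (Sum.elim xE1 xE2) (Sum.elim xF1 xF2))
        (Sum.elim (Sum.elim xH1 xH2) (Sum.elim xG1 xG2)))
        (Sum.elim (Sum.elim xq1 xq2) (Sum.elim xr1 xr2))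
    = Sum.elim
        (Sum.elim
          (α₁⁻¹ • (AE *ᵥ reV uh) - α₁⁻¹ • (BE *ᵥ imV uh) + α₂⁻¹ • (AFᵀ *ᵥ reV ph)
            + α₂⁻¹ • (BFᵀ *ᵥ imV ph) - β₁⁻¹ • xq1)
          (α₁⁻¹ • (AE *ᵥ imV uh) + α₁⁻¹ • (BE *ᵥ reV uh) + α₂⁻¹ • (AFᵀ *ᵥ imV ph)
            - α₂⁻¹ • (BFᵀ *ᵥ reV ph) - β₁⁻¹ • xq2))
        (Sum.elim
          (α₃⁻¹ • (AH *ᵥ reV uh) - α₃⁻¹ • (BH *ᵥ imV uh) + α₄⁻¹ • (AG *ᵥ reV ph)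
            - α₄⁻¹ • (BG *ᵥ imV ph) - β₂⁻¹ • xr1)
          (α₃⁻¹ • (AH *ᵥ imV uh) + α₃⁻¹ • (BH *ᵥ reV uh) + α₄⁻¹ • (AG *ᵥ imV ph)
            + α₄⁻¹ • (BG *ᵥ reV ph) - β₂⁻¹ • xr2)) := by
  funext i
  rcases i with (i | i) <;> rcases i with (i | i) <;>
    simp only [bigM, Matrix.fromBlocks_mulVec, Matrix.fromCols_mulVec_sumElim,
      Matrix.fromRows_mulVec, Matrix.zero_mulVec, add_zero, zero_add, Sum.elim_inl, Sum.elim_inr,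
      Sum.elim_comp_inl, Sum.elim_comp_inr,
      Matrix.smul_mulVec, ← Matrix.mulVec_mulVec, cstar_mul_mulVec, hAE, hBE, hAF, hBF, hAH, hBH, hAG, hBG,
      rowKronId_mulVec, idKronRow_mulVec, Matrix.one_mulVec,
      Pi.add_apply, Pi.sub_apply, Pi.smul_apply, smul_eq_mul, neg_mul] <;>
    ring

end BigBlock

section BigBlock2

variable {n m : ℕ} (E : Matrix (Fin n) (Fin n) ℂ) (F H : Matrix (Fin m) (Fin n) ℂ)
  (G : Matrix (Fin m) (Fin m) ℂ) (uh : Fin n → ℂ) (ph : Fin m → ℂ)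
  (α₁ α₂ α₃ α₄ β₁ β₂ : ℝ)

lemma bigM_isUnit (hβ₁ : β₁ ≠ 0) (hβ₂ : β₂ ≠ 0) :
    IsUnit (bigM E F H G uh ph α₁ α₂ α₃ α₄ β₁ β₂ *
      (bigM E F H G uh ph α₁ α₂ α₃ α₄ β₁ β₂)ᵀ) := by
  apply isUnit_mul_transpose_self
  intro v hv
  have key : ∀ c : LIdx n m,
      ((bigM E F H G uh ph α₁ α₂ α₃ α₄ β₁ β₂)ᵀ *ᵥ v) (Sum.inr c)
        = Sum.elim (fun z => -β₁⁻¹ * v (Sum.inl z)) (fun z => -β₂⁻¹ * v (Sum.inr z)) c := by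
    intro c
    rcases c with z | z <;>
      simp [bigM, Matrix.mulVec, dotProduct, Fintype.sum_sum_type, Matrix.transpose_apply,
        Matrix.fromBlocks_apply₁₂, Matrix.fromBlocks_apply₂₂,
        Matrix.fromCols_apply_inl, Matrix.fromCols_apply_inr,
        Matrix.one_apply, mul_ite, ite_mul, mul_zero, zero_mul, mul_comm]
  funext i
  have hz : ∀ c : LIdx n m, ((bigM E F H G uh ph α₁ α₂ α₃ α₄ β₁ β₂)ᵀ *ᵥ v) (Sum.inr c) = 0 :=
    fun c => congrFun hv (Sum.inr c)
  rcases i with z | z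
  · have h0 : -β₁⁻¹ * v (Sum.inl z) = 0 := by
      have := (key (Sum.inl z)).symm.trans (hz (Sum.inl z))
      simpa using this
    have : v (Sum.inl z) = 0 := by
      rcases mul_eq_zero.mp h0 with h | h
      · exact absurd h (by simp [hβ₁])
      · exact h
    simpa using this
  · have h0 : -β₂⁻¹ * v (Sum.inr z) = 0 := by
      have := (key (Sum.inr z)).symm.trans (hz (Sum.inr z))
      simpa using this
    have : v (Sum.inr z) = 0 := by
      rcases mul_eq_zero.mp h0 with h | h
      · exact absurd h (by simp [hβ₂])
      · exact h
    simpa using this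

lemma N1_col_zero {n' : ℕ} (E' : Matrix (Fin n') (Fin n') ℂ) (p : SymIdx n')
    (hp : thetaR E' p.1.1 p.1.2 = 0) (cr : Fin n' × Fin n') :
    (JS n' * Phi E' * (DS n')⁻¹) cr p = 0 := by
  rw [DS_inv, Matrix.mul_diagonal, Phi, Matrix.mul_diagonal]
  show JS n' cr p * vecS (thetaR E') p * _ = 0
  rw [show vecS (thetaR E') p = thetaR E' p.1.1 p.1.2 from rfl, hp, mul_zero, zero_mul]

lemma N2_col_zero {n' : ℕ} (E' : Matrix (Fin n') (Fin n') ℂ) (p : SkewIdx n')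
    (hp : thetaR E' p.1.1 p.1.2 = 0) (cr : Fin n' × Fin n') :
    (JSK n' * Psi E' * (DSK n')⁻¹) cr p = 0 := by
  rw [DSK_inv, Matrix.mul_diagonal, Psi, Matrix.mul_diagonal]
  show JSK n' cr p * vecSK (thetaR E') p * _ = 0
  rw [show vecSK (thetaR E') p = thetaR E' p.1.1 p.1.2 from rfl, hp, mul_zero, zero_mul]

lemma Sig_col_zero {a b : ℕ} (X : Matrix (Fin b) (Fin a) ℂ) (q : Fin a × Fin b)
    (hq : thetaR X q.2 q.1 = 0) (cr : Fin a × Fin b) :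
    Sig X cr q = 0 := by
  rcases eq_or_ne cr q with rfl | hne
  · rw [Sig, Matrix.diagonal_apply_eq]
    exact hq
  · rw [Sig, Matrix.diagonal_apply_ne _ hne]

lemma mul_col_zero {a b : Type*} {c : Type*} [Fintype b] (P : Matrix a b ℝ) (Q : Matrix b c ℝ)
    (j : c) (hj : ∀ r, Q r j = 0) (i : a) : (P * Q) i j = 0 := by
  rw [Matrix.mul_apply]
  exact Finset.sum_eq_zero fun r _ => by rw [hj r, mul_zero]

lemma transpose_mulVec_eq_zero {ρ κ : Type*} [Fintype ρ] (M : Matrix ρ κ ℝ) (c : κ)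
    (hc : ∀ r, M r c = 0) (y : ρ → ℝ) : (Mᵀ *ᵥ y) c = 0 := by
  rw [Matrix.mulVec]
  exact Finset.sum_eq_zero fun r _ => by
    show Mᵀ c r * y r = 0
    rw [Matrix.transpose_apply, hc r, zero_mul]

lemma sum_sq_elim {A B : Type*} [Fintype A] [Fintype B] (f : A → ℝ) (g : B → ℝ) :
    ∑ i : A ⊕ B, Sum.elim f g i ^ 2 = ∑ i, f i ^ 2 + ∑ i, g i ^ 2 := by
  rw [Fintype.sum_sum_type]; simp

end BigBlock2

section MoreHelpers

variable {n m : ℕ} (E : Matrix (Fin n) (Fin n) ℂ) (F H : Matrix (Fin m) (Fin n) ℂ)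
  (G : Matrix (Fin m) (Fin m) ℂ) (uh : Fin n → ℂ) (ph : Fin m → ℂ)
  (α₁ α₂ α₃ α₄ β₁ β₂ : ℝ)

lemma bigM_colzero_E1 (p : SymIdx n) (hp : thetaR E p.1.1 p.1.2 = 0) (r : LIdx n m) :
    bigM E F H G uh ph α₁ α₂ α₃ α₄ β₁ β₂ r (Sum.inl (Sum.inl (Sum.inl (Sum.inl p)))) = 0 := by
  rcases r with (a | a) | (b | b)
  · show ((α₁⁻¹ • (rowKronId (b := n) (reV uh) * (JS n * Phi E * (DS n)⁻¹))) : Matrix (Fin n) (SymIdx n) ℝ) a p = 0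
    rw [Matrix.smul_apply, mul_col_zero _ _ _ (N1_col_zero E p hp) a, smul_zero]
  · show ((α₁⁻¹ • (rowKronId (b := n) (imV uh) * (JS n * Phi E * (DS n)⁻¹))) : Matrix (Fin n) (SymIdx n) ℝ) a p = 0
    rw [Matrix.smul_apply, mul_col_zero _ _ _ (N1_col_zero E p hp) a, smul_zero]
  · rfl
  · rfl

lemma bigM_colzero_E2 (p : SkewIdx n) (hp : thetaR E p.1.1 p.1.2 = 0) (r : LIdx n m) :
    bigM E F H G uh ph α₁ α₂ α₃ α₄ β₁ β₂ r (Sum.inl (Sum.inl (Sum.inl (Sum.inr p)))) = 0 := by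
  rcases r with (a | a) | (b | b)
  · show (((-(α₁⁻¹)) • (rowKronId (b := n) (imV uh) * (JSK n * Psi E * (DSK n)⁻¹))) : Matrix (Fin n) (SkewIdx n) ℝ) a p = 0
    rw [Matrix.smul_apply, mul_col_zero _ _ _ (N2_col_zero E p hp) a, smul_zero]
  · show ((α₁⁻¹ • (rowKronId (b := n) (reV uh) * (JSK n * Psi E * (DSK n)⁻¹))) : Matrix (Fin n) (SkewIdx n) ℝ) a p = 0
    rw [Matrix.smul_apply, mul_col_zero _ _ _ (N2_col_zero E p hp) a, smul_zero]
  · rfl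
  · rfl

lemma bigM_colzero_F1 (q : Fin n × Fin m) (hq : thetaR F q.2 q.1 = 0) (r : LIdx n m) :
    bigM E F H G uh ph α₁ α₂ α₃ α₄ β₁ β₂ r (Sum.inl (Sum.inl (Sum.inr (Sum.inl q)))) = 0 := by
  rcases r with (a | a) | (b | b)
  · show ((α₂⁻¹ • (idKronRow (a := n) (reV ph) * Sig F)) : Matrix (Fin n) (Fin n × Fin m) ℝ) a q = 0
    rw [Matrix.smul_apply, mul_col_zero _ _ _ (Sig_col_zero F q hq) a, smul_zero]
  · show ((α₂⁻¹ • (idKronRow (a := n) (imV ph) * Sig F)) : Matrix (Fin n) (Fin n × Fin m) ℝ) a q = 0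
    rw [Matrix.smul_apply, mul_col_zero _ _ _ (Sig_col_zero F q hq) a, smul_zero]
  · rfl
  · rfl

lemma bigM_colzero_F2 (q : Fin n × Fin m) (hq : thetaR F q.2 q.1 = 0) (r : LIdx n m) :
    bigM E F H G uh ph α₁ α₂ α₃ α₄ β₁ β₂ r (Sum.inl (Sum.inl (Sum.inr (Sum.inr q)))) = 0 := by
  rcases r with (a | a) | (b | b)
  · show ((α₂⁻¹ • (idKronRow (a := n) (imV ph) * Sig F)) : Matrix (Fin n) (Fin n × Fin m) ℝ) a q = 0
    rw [Matrix.smul_apply, mul_col_zero _ _ _ (Sig_col_zero F q hq) a, smul_zero]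
  · show (((-(α₂⁻¹)) • (idKronRow (a := n) (reV ph) * Sig F)) : Matrix (Fin n) (Fin n × Fin m) ℝ) a q = 0
    rw [Matrix.smul_apply, mul_col_zero _ _ _ (Sig_col_zero F q hq) a, smul_zero]
  · rfl
  · rfl

lemma bigM_colzero_H1 (q : Fin n × Fin m) (hq : thetaR H q.2 q.1 = 0) (r : LIdx n m) :
    bigM E F H G uh ph α₁ α₂ α₃ α₄ β₁ β₂ r (Sum.inl (Sum.inr (Sum.inl (Sum.inl q)))) = 0 := by
  rcases r with (a | a) | (b | b)
  · rfl
  · rfl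
  · show ((α₃⁻¹ • (rowKronId (b := m) (reV uh) * Sig H)) : Matrix (Fin m) (Fin n × Fin m) ℝ) b q = 0
    rw [Matrix.smul_apply, mul_col_zero _ _ _ (Sig_col_zero H q hq) b, smul_zero]
  · show ((α₃⁻¹ • (rowKronId (b := m) (imV uh) * Sig H)) : Matrix (Fin m) (Fin n × Fin m) ℝ) b q = 0
    rw [Matrix.smul_apply, mul_col_zero _ _ _ (Sig_col_zero H q hq) b, smul_zero]

lemma bigM_colzero_H2 (q : Fin n × Fin m) (hq : thetaR H q.2 q.1 = 0) (r : LIdx n m) :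
    bigM E F H G uh ph α₁ α₂ α₃ α₄ β₁ β₂ r (Sum.inl (Sum.inr (Sum.inl (Sum.inr q)))) = 0 := by
  rcases r with (a | a) | (b | b)
  · rfl
  · rfl
  · show (((-(α₃⁻¹)) • (rowKronId (b := m) (imV uh) * Sig H)) : Matrix (Fin m) (Fin n × Fin m) ℝ) b q = 0
    rw [Matrix.smul_apply, mul_col_zero _ _ _ (Sig_col_zero H q hq) b, smul_zero]
  · show ((α₃⁻¹ • (rowKronId (b := m) (reV uh) * Sig H)) : Matrix (Fin m) (Fin n × Fin m) ℝ) b q = 0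
    rw [Matrix.smul_apply, mul_col_zero _ _ _ (Sig_col_zero H q hq) b, smul_zero]

lemma bigM_colzero_G1 (p : SymIdx m) (hp : thetaR G p.1.1 p.1.2 = 0) (r : LIdx n m) :
    bigM E F H G uh ph α₁ α₂ α₃ α₄ β₁ β₂ r (Sum.inl (Sum.inr (Sum.inr (Sum.inl p)))) = 0 := by
  rcases r with (a | a) | (b | b)
  · rfl
  · rfl
  · show ((α₄⁻¹ • (rowKronId (b := m) (reV ph) * (JS m * Phi G * (DS m)⁻¹))) : Matrix (Fin m) (SymIdx m) ℝ) b p = 0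
    rw [Matrix.smul_apply, mul_col_zero _ _ _ (N1_col_zero G p hp) b, smul_zero]
  · show ((α₄⁻¹ • (rowKronId (b := m) (imV ph) * (JS m * Phi G * (DS m)⁻¹))) : Matrix (Fin m) (SymIdx m) ℝ) b p = 0
    rw [Matrix.smul_apply, mul_col_zero _ _ _ (N1_col_zero G p hp) b, smul_zero]

lemma bigM_colzero_G2 (p : SkewIdx m) (hp : thetaR G p.1.1 p.1.2 = 0) (r : LIdx n m) :
    bigM E F H G uh ph α₁ α₂ α₃ α₄ β₁ β₂ r (Sum.inl (Sum.inr (Sum.inr (Sum.inr p)))) = 0 := by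
  rcases r with (a | a) | (b | b)
  · rfl
  · rfl
  · show (((-(α₄⁻¹)) • (rowKronId (b := m) (imV ph) * (JSK m * Psi G * (DSK m)⁻¹))) : Matrix (Fin m) (SkewIdx m) ℝ) b p = 0
    rw [Matrix.smul_apply, mul_col_zero _ _ _ (N2_col_zero G p hp) b, smul_zero]
  · show ((α₄⁻¹ • (rowKronId (b := m) (reV ph) * (JSK m * Psi G * (DSK m)⁻¹))) : Matrix (Fin m) (SkewIdx m) ℝ) b p = 0
    rw [Matrix.smul_apply, mul_col_zero _ _ _ (N2_col_zero G p hp) b, smul_zero]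

end MoreHelpers

section ThetaFacts

variable {I J : Type*}

lemma thetaR_mul_self (X : Matrix I J ℂ) (i : I) (j : J) :
    thetaR X i j * thetaR X i j = thetaR X i j := by
  simp only [thetaR, Matrix.of_apply]
  split_ifs <;> simp

lemma thetaR_cases (X : Matrix I J ℂ) (i : I) (j : J) :
    thetaR X i j = 0 ∨ thetaR X i j = 1 := by
  simp only [thetaR, Matrix.of_apply]
  split_ifs <;> simp

lemma reM_hadamard_theta (X D : Matrix I J ℂ) (i : I) (j : J) :
    reM (D.hadamard (theta X)) i j = reM D i j * thetaR X i j := by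
  unfold reM theta thetaR Matrix.hadamard
  simp only [Matrix.map_apply, Matrix.of_apply]
  split_ifs <;> simp

lemma imM_hadamard_theta (X D : Matrix I J ℂ) (i : I) (j : J) :
    imM (D.hadamard (theta X)) i j = imM D i j * thetaR X i j := by
  unfold imM theta thetaR Matrix.hadamard
  simp only [Matrix.map_apply, Matrix.of_apply]
  split_ifs <;> simp

lemma reV_add {K : Type*} (f g : K → ℂ) : reV (f + g) = reV f + reV g := by
  funext k; simp [reV]

lemma reV_sub {K : Type*} (f g : K → ℂ) : reV (f - g) = reV f - reV g := by
  funext k; simp [reV]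

lemma imV_add {K : Type*} (f g : K → ℂ) : imV (f + g) = imV f + imV g := by
  funext k; simp [imV]

lemma imV_sub {K : Type*} (f g : K → ℂ) : imV (f - g) = imV f - imV g := by
  funext k; simp [imV]

lemma frob_sq_complex [Fintype I] [Fintype J] (X : Matrix I J ℂ) :
    frob X ^ 2 = ∑ i, ∑ j, (reM X i j ^ 2 + imM X i j ^ 2) := by
  rw [frob, Real.sq_sqrt (by positivity)]
  congr 1; funext i; congr 1; funext j
  rw [Complex.sq_norm, Complex.normSq_apply]
  simp only [reM, imM, Matrix.map_apply]
  ring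

lemma eunorm_sq_complex [Fintype I] (v : I → ℂ) :
    eunorm v ^ 2 = ∑ i, (reV v i ^ 2 + imV v i ^ 2) := by
  rw [eunorm, Real.sq_sqrt (by positivity)]
  congr 1; funext i
  rw [Complex.sq_norm, Complex.normSq_apply]
  simp only [reV, imV]
  ring

end ThetaFacts

section NormAlgebra

lemma sym_skew_sum {N : ℕ} (A B : Matrix (Fin N) (Fin N) ℝ)
    (hA : ∀ i j, A i j = A j i) (hB : ∀ i j, B i j = -B j i) :
    ∑ p : SymIdx N, ((if p.1.1 = p.1.2 then (1:ℝ) else Real.sqrt 2) * A p.1.1 p.1.2) ^ 2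
      + ∑ p : SkewIdx N, (Real.sqrt 2 * B p.1.1 p.1.2) ^ 2
    = ∑ i, ∑ j, (A i j ^ 2 + B i j ^ 2) := by
  have hBd : ∀ i, B i i = 0 := fun i => by have := hB i i; linarith
  have hsplitA : ∑ p : Fin N × Fin N, A p.1 p.2 ^ 2
      = ∑ p : SymIdx N, A p.1.1 p.1.2 ^ 2 + ∑ p : SkewIdx N, A p.1.1 p.1.2 ^ 2 := by
    rw [sum_split (fun p => A p.1 p.2 ^ 2)]
    congr 1
    exact Finset.sum_congr rfl fun p _ => by rw [hA p.1.2 p.1.1]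
  have hsplitB : ∑ p : Fin N × Fin N, B p.1 p.2 ^ 2
      = ∑ p : SymIdx N, B p.1.1 p.1.2 ^ 2 + ∑ p : SkewIdx N, B p.1.1 p.1.2 ^ 2 := by
    rw [sum_split (fun p => B p.1 p.2 ^ 2)]
    congr 1
    exact Finset.sum_congr rfl fun p _ => by rw [hB p.1.2 p.1.1]; ring
  have hSymB : ∑ p : SymIdx N, B p.1.1 p.1.2 ^ 2 = ∑ p : SkewIdx N, B p.1.1 p.1.2 ^ 2 := by
    rw [← sum_symIdx_strict (fun q => B q.1 q.2 ^ 2)]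
    apply Finset.sum_congr rfl
    rintro ⟨⟨i, j⟩, hji⟩ _
    by_cases hlt : (j : Fin N) < i
    · rw [if_pos hlt]
    · have hij : (i : Fin N) = j := le_antisymm (not_lt.mp hlt) hji
      rw [if_neg hlt]
      simp [hij, hBd]
  have hL1 : ∑ p : SymIdx N, ((if p.1.1 = p.1.2 then (1:ℝ) else Real.sqrt 2) * A p.1.1 p.1.2) ^ 2
      = ∑ p : SymIdx N, A p.1.1 p.1.2 ^ 2 + ∑ p : SkewIdx N, A p.1.1 p.1.2 ^ 2 := by
    rw [← sum_symIdx_strict (fun q => A q.1 q.2 ^ 2), ← Finset.sum_add_distrib]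
    apply Finset.sum_congr rfl
    rintro ⟨⟨i, j⟩, hji⟩ _
    by_cases hd : (i : Fin N) = j
    · have hnlt : ¬ ((j : Fin N) < i) := by rw [hd]; exact lt_irrefl _
      rw [if_pos hd, if_neg hnlt, one_mul, add_zero]
    · have hlt : (j : Fin N) < i := lt_of_le_of_ne hji (fun h => hd h.symm)
      rw [if_neg hd, if_pos hlt, mul_pow, Real.sq_sqrt (by norm_num : (0:ℝ) ≤ 2)]
      ring
  have hL2 : ∑ p : SkewIdx N, (Real.sqrt 2 * B p.1.1 p.1.2) ^ 2
      = 2 * ∑ p : SkewIdx N, B p.1.1 p.1.2 ^ 2 := by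
    rw [Finset.mul_sum]
    apply Finset.sum_congr rfl
    intro p _
    rw [mul_pow, Real.sq_sqrt (by norm_num : (0:ℝ) ≤ 2)]
  have hRHS : ∑ i, ∑ j, (A i j ^ 2 + B i j ^ 2)
      = ∑ p : Fin N × Fin N, A p.1 p.2 ^ 2 + ∑ p : Fin N × Fin N, B p.1 p.2 ^ 2 := by
    rw [← Finset.sum_add_distrib, Fintype.sum_prod_type]
  rw [hL1, hL2, hRHS, hsplitA, hsplitB]
  linarith

lemma prod_swap_sum {a b : ℕ} (g : Fin b → Fin a → ℝ) :
    ∑ q : Fin a × Fin b, g q.2 q.1 = ∑ i, ∑ j, g i j := by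
  rw [Fintype.sum_prod_type]
  exact Finset.sum_comm

end NormAlgebra

section EquivLemmas

variable {n m : ℕ} (E : Matrix (Fin n) (Fin n) ℂ) (F H : Matrix (Fin m) (Fin n) ℂ)
  (G : Matrix (Fin m) (Fin m) ℂ) (uh : Fin n → ℂ) (ph : Fin m → ℂ)
  {α₁ α₂ α₃ α₄ β₁ β₂ : ℝ}

lemma bigM_full
    (hα₁ : α₁ ≠ 0) (hα₂ : α₂ ≠ 0) (hα₃ : α₃ ≠ 0) (hα₄ : α₄ ≠ 0)
    (hβ₁ : β₁ ≠ 0) (hβ₂ : β₂ ≠ 0)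
    (E' : Matrix (Fin n) (Fin n) ℂ) (F' H' : Matrix (Fin m) (Fin n) ℂ)
    (G' : Matrix (Fin m) (Fin m) ℂ) (dq : Fin n → ℂ) (dr : Fin m → ℂ)
    (xE1 : SymIdx n → ℝ) (xE2 : SkewIdx n → ℝ) (xF1 xF2 xH1 xH2 : Fin n × Fin m → ℝ)
    (xG1 : SymIdx m → ℝ) (xG2 : SkewIdx m → ℝ)
    (hAE : (JS n * Phi E * (DS n)⁻¹) *ᵥ xE1 = vecM (α₁ • reM E'))
    (hBE : (JSK n * Psi E * (DSK n)⁻¹) *ᵥ xE2 = vecM (α₁ • imM E'))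
    (hAF : Sig F *ᵥ xF1 = vecM (α₂ • reM F')) (hBF : Sig F *ᵥ xF2 = vecM (α₂ • imM F'))
    (hAH : Sig H *ᵥ xH1 = vecM (α₃ • reM H')) (hBH : Sig H *ᵥ xH2 = vecM (α₃ • imM H'))
    (hAG : (JS m * Phi G * (DS m)⁻¹) *ᵥ xG1 = vecM (α₄ • reM G'))
    (hBG : (JSK m * Psi G * (DSK m)⁻¹) *ᵥ xG2 = vecM (α₄ • imM G')) :
    bigM E F H G uh ph α₁ α₂ α₃ α₄ β₁ β₂ *ᵥ
      Sum.elim (Sum.elim (Sum.elim (Sum.elim xE1 xE2) (Sum.elim xF1 xF2))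
        (Sum.elim (Sum.elim xH1 xH2) (Sum.elim xG1 xG2)))
        (Sum.elim (Sum.elim (β₁ • reV dq) (β₁ • imV dq)) (Sum.elim (β₂ • reV dr) (β₂ • imV dr)))
    = Sum.elim
        (Sum.elim (reV (E' *ᵥ uh + F'ᴴ *ᵥ ph - dq)) (imV (E' *ᵥ uh + F'ᴴ *ᵥ ph - dq)))
        (Sum.elim (reV (H' *ᵥ uh + G' *ᵥ ph - dr)) (imV (H' *ᵥ uh + G' *ᵥ ph - dr))) := by
  rw [bigM_mulVec E F H G uh ph α₁ α₂ α₃ α₄ β₁ β₂ _ _ _ _ _ _ _ _ _ _ _ _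
      _ _ _ _ _ _ _ _ hAE hBE hAF hBF hAH hBH hAG hBG]
  congr 1 <;> congr 1 <;>
    simp only [reV_add, reV_sub, imV_add, imV_sub, reV_mulVec, imV_mulVec,
      reM_conjTranspose, imM_conjTranspose, Matrix.neg_mulVec, Matrix.transpose_smul,
      Matrix.smul_mulVec, smul_smul, inv_mul_cancel₀ hα₁, inv_mul_cancel₀ hα₂,
      inv_mul_cancel₀ hα₃, inv_mul_cancel₀ hα₄, inv_mul_cancel₀ hβ₁, inv_mul_cancel₀ hβ₂,
      one_smul, sub_neg_eq_add] <;>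
    abel

lemma feas_shift {I K : Type*} [Fintype I] [Fintype K] {J : Type*} [Fintype J]
    (S S' : Matrix K I ℂ) (T T' : Matrix K J ℂ) (u : I → ℂ) (p : J → ℂ)
    (q dq : K → ℂ) :
    (S + S') *ᵥ u + (T + T') *ᵥ p = q + dq ↔
      S' *ᵥ u + T' *ᵥ p - dq = q - S *ᵥ u - T *ᵥ p := by
  rw [Matrix.add_mulVec, Matrix.add_mulVec]
  constructor
  · intro h
    funext k
    have hk := congrFun h k
    simp only [Pi.add_apply, Pi.sub_apply] at hk ⊢
    linear_combination hk
  · intro h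
    funext k
    have hk := congrFun h k
    simp only [Pi.add_apply, Pi.sub_apply] at hk ⊢
    linear_combination hk

lemma sum_elim_eq_iff {A B C : Type*} (f₁ : A → C) (f₂ : B → C) (g₁ : A → C) (g₂ : B → C) :
    Sum.elim f₁ f₂ = Sum.elim g₁ g₂ ↔ f₁ = g₁ ∧ f₂ = g₂ := by
  constructor
  · intro h
    exact ⟨funext fun a => congrFun h (Sum.inl a), funext fun b => congrFun h (Sum.inr b)⟩
  · rintro ⟨h1, h2⟩
    rw [h1, h2]

lemma herm_of_re_im {N : ℕ} (a b : Matrix (Fin N) (Fin N) ℝ)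
    (ha : ∀ i j, a i j = a j i) (hb : ∀ i j, b i j = -b j i) :
    (Matrix.of fun i j => (a i j : ℂ) + (b i j : ℂ) * Complex.I).IsHermitian := by
  ext i j
  show star ((Matrix.of fun i j => (a i j : ℂ) + (b i j : ℂ) * Complex.I) j i) = _
  simp only [Matrix.of_apply]
  apply Complex.ext <;> simp [ha j i, hb j i]

lemma reM_mk {N M : ℕ} (a b : Matrix (Fin N) (Fin M) ℝ) :
    reM (Matrix.of fun i j => (a i j : ℂ) + (b i j : ℂ) * Complex.I) = a := by
  funext i j; simp [reM]

lemma imM_mk {N M : ℕ} (a b : Matrix (Fin N) (Fin M) ℝ) :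
    imM (Matrix.of fun i j => (a i j : ℂ) + (b i j : ℂ) * Complex.I) = b := by
  funext i j; simp [imM]

lemma reV_mk {K : Type*} (f g : K → ℝ) :
    reV (fun k => (f k : ℂ) + (g k : ℂ) * Complex.I) = f := by
  funext k; simp [reV]

lemma imV_mk {K : Type*} (f g : K → ℝ) :
    imV (fun k => (f k : ℂ) + (g k : ℂ) * Complex.I) = g := by
  funext k; simp [imV]

lemma reM_symm_of_herm {N : ℕ} {D : Matrix (Fin N) (Fin N) ℂ} (hD : D.IsHermitian) :
    ∀ i j, reM D i j = reM D j i := by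
  intro i j
  have h : star (D i j) = D j i := congrFun (congrFun hD j) i
  show (D i j).re = (D j i).re
  rw [← h, Complex.star_def, Complex.conj_re]

lemma imM_skew_of_herm {N : ℕ} {D : Matrix (Fin N) (Fin N) ℂ} (hD : D.IsHermitian) :
    ∀ i j, imM D i j = - imM D j i := by
  intro i j
  have h : star (D i j) = D j i := congrFun (congrFun hD j) i
  show (D i j).im = -(D j i).im
  rw [← h, Complex.star_def, Complex.conj_im, neg_neg]

lemma zeta2_sq (E' : Matrix (Fin n) (Fin n) ℂ) (F' H' : Matrix (Fin m) (Fin n) ℂ)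
    (G' : Matrix (Fin m) (Fin m) ℂ) (dq : Fin n → ℂ) (dr : Fin m → ℂ) :
    zeta2 α₁ α₂ α₃ α₄ β₁ β₂ E' F' H' G' dq dr ^ 2
      = α₁ ^ 2 * frob E' ^ 2 + α₂ ^ 2 * frob F' ^ 2 + α₃ ^ 2 * frob H' ^ 2 +
        α₄ ^ 2 * frob G' ^ 2 + β₁ ^ 2 * eunorm dq ^ 2 + β₂ ^ 2 * eunorm dr ^ 2 := by
  rw [zeta2, Real.sq_sqrt (by positivity)]

end EquivLemmas

section ZetaNorm

variable {n m : ℕ} {α₁ α₂ α₃ α₄ β₁ β₂ : ℝ}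

lemma zeta2_eq_eunorm
    (E' : Matrix (Fin n) (Fin n) ℂ) (F' H' : Matrix (Fin m) (Fin n) ℂ)
    (G' : Matrix (Fin m) (Fin m) ℂ) (dq : Fin n → ℂ) (dr : Fin m → ℂ)
    (xE1 : SymIdx n → ℝ) (xE2 : SkewIdx n → ℝ) (xF1 xF2 xH1 xH2 : Fin n × Fin m → ℝ)
    (xG1 : SymIdx m → ℝ) (xG2 : SkewIdx m → ℝ)
    (hE'1 : ∀ i j, reM E' i j = reM E' j i) (hE'2 : ∀ i j, imM E' i j = - imM E' j i)
    (hG'1 : ∀ i j, reM G' i j = reM G' j i) (hG'2 : ∀ i j, imM G' i j = - imM G' j i)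
    (hxE1 : ∀ p : SymIdx n, xE1 p ^ 2
      = ((if p.1.1 = p.1.2 then (1:ℝ) else Real.sqrt 2) * (α₁ • reM E') p.1.1 p.1.2) ^ 2)
    (hxE2 : ∀ p : SkewIdx n, xE2 p ^ 2 = (Real.sqrt 2 * (α₁ • imM E') p.1.1 p.1.2) ^ 2)
    (hxF1 : ∀ q, xF1 q ^ 2 = ((α₂ • reM F') q.2 q.1) ^ 2)
    (hxF2 : ∀ q, xF2 q ^ 2 = ((α₂ • imM F') q.2 q.1) ^ 2)
    (hxH1 : ∀ q, xH1 q ^ 2 = ((α₃ • reM H') q.2 q.1) ^ 2)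
    (hxH2 : ∀ q, xH2 q ^ 2 = ((α₃ • imM H') q.2 q.1) ^ 2)
    (hxG1 : ∀ p : SymIdx m, xG1 p ^ 2
      = ((if p.1.1 = p.1.2 then (1:ℝ) else Real.sqrt 2) * (α₄ • reM G') p.1.1 p.1.2) ^ 2)
    (hxG2 : ∀ p : SkewIdx m, xG2 p ^ 2 = (Real.sqrt 2 * (α₄ • imM G') p.1.1 p.1.2) ^ 2) :
    zeta2 α₁ α₂ α₃ α₄ β₁ β₂ E' F' H' G' dq dr
      = eunorm (Sum.elim (Sum.elim (Sum.elim (Sum.elim xE1 xE2) (Sum.elim xF1 xF2))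
          (Sum.elim (Sum.elim xH1 xH2) (Sum.elim xG1 xG2)))
          (Sum.elim (Sum.elim (β₁ • reV dq) (β₁ • imV dq))
            (Sum.elim (β₂ • reV dr) (β₂ • imV dr)))) := by
  rw [zeta2]
  conv_rhs => rw [eunorm]
  congr 1
  simp only [Real.norm_eq_abs, sq_abs]
  rw [sum_sq_elim, sum_sq_elim, sum_sq_elim, sum_sq_elim, sum_sq_elim, sum_sq_elim,
    sum_sq_elim, sum_sq_elim, sum_sq_elim, sum_sq_elim, sum_sq_elim]
  have hEgrp : (∑ p : SymIdx n, xE1 p ^ 2) + ∑ p : SkewIdx n, xE2 p ^ 2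
      = α₁ ^ 2 * frob E' ^ 2 := by
    rw [Finset.sum_congr rfl (fun p _ => hxE1 p), Finset.sum_congr rfl (fun p _ => hxE2 p),
      sym_skew_sum (α₁ • reM E') (α₁ • imM E')
        (fun i j => by simp only [Matrix.smul_apply, smul_eq_mul]; rw [hE'1 i j])
        (fun i j => by simp only [Matrix.smul_apply, smul_eq_mul]; rw [hE'2 i j]; ring),
      frob_sq_complex, Finset.mul_sum]
    apply Finset.sum_congr rfl; intro i _
    rw [Finset.mul_sum]
    apply Finset.sum_congr rfl; intro j _
    simp only [Matrix.smul_apply, smul_eq_mul]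
    ring
  have hGgrp : (∑ p : SymIdx m, xG1 p ^ 2) + ∑ p : SkewIdx m, xG2 p ^ 2
      = α₄ ^ 2 * frob G' ^ 2 := by
    rw [Finset.sum_congr rfl (fun p _ => hxG1 p), Finset.sum_congr rfl (fun p _ => hxG2 p),
      sym_skew_sum (α₄ • reM G') (α₄ • imM G')
        (fun i j => by simp only [Matrix.smul_apply, smul_eq_mul]; rw [hG'1 i j])
        (fun i j => by simp only [Matrix.smul_apply, smul_eq_mul]; rw [hG'2 i j]; ring),
      frob_sq_complex, Finset.mul_sum]
    apply Finset.sum_congr rfl; intro i _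
    rw [Finset.mul_sum]
    apply Finset.sum_congr rfl; intro j _
    simp only [Matrix.smul_apply, smul_eq_mul]
    ring
  have hFgrp : (∑ q : Fin n × Fin m, xF1 q ^ 2) + ∑ q : Fin n × Fin m, xF2 q ^ 2
      = α₂ ^ 2 * frob F' ^ 2 := by
    rw [Finset.sum_congr rfl (fun q _ => hxF1 q), Finset.sum_congr rfl (fun q _ => hxF2 q),
      prod_swap_sum (fun i j => ((α₂ • reM F') i j) ^ 2),
      prod_swap_sum (fun i j => ((α₂ • imM F') i j) ^ 2),
      frob_sq_complex, Finset.mul_sum, ← Finset.sum_add_distrib]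
    apply Finset.sum_congr rfl; intro i _
    rw [Finset.mul_sum, ← Finset.sum_add_distrib]
    apply Finset.sum_congr rfl; intro j _
    simp only [Matrix.smul_apply, smul_eq_mul]
    ring
  have hHgrp : (∑ q : Fin n × Fin m, xH1 q ^ 2) + ∑ q : Fin n × Fin m, xH2 q ^ 2
      = α₃ ^ 2 * frob H' ^ 2 := by
    rw [Finset.sum_congr rfl (fun q _ => hxH1 q), Finset.sum_congr rfl (fun q _ => hxH2 q),
      prod_swap_sum (fun i j => ((α₃ • reM H') i j) ^ 2),
      prod_swap_sum (fun i j => ((α₃ • imM H') i j) ^ 2),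
      frob_sq_complex, Finset.mul_sum, ← Finset.sum_add_distrib]
    apply Finset.sum_congr rfl; intro i _
    rw [Finset.mul_sum, ← Finset.sum_add_distrib]
    apply Finset.sum_congr rfl; intro j _
    simp only [Matrix.smul_apply, smul_eq_mul]
    ring
  have hqgrp : (∑ k, (β₁ • reV dq) k ^ 2) + ∑ k, (β₁ • imV dq) k ^ 2
      = β₁ ^ 2 * eunorm dq ^ 2 := by
    rw [eunorm_sq_complex, Finset.mul_sum, ← Finset.sum_add_distrib]
    apply Finset.sum_congr rfl; intro k _
    simp only [Pi.smul_apply, smul_eq_mul]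
    ring
  have hrgrp : (∑ k, (β₂ • reV dr) k ^ 2) + ∑ k, (β₂ • imV dr) k ^ 2
      = β₂ ^ 2 * eunorm dr ^ 2 := by
    rw [eunorm_sq_complex, Finset.mul_sum, ← Finset.sum_add_distrib]
    apply Finset.sum_congr rfl; intro k _
    simp only [Pi.smul_apply, smul_eq_mul]
    ring
  linarith

end ZetaNorm


/-- Theorem 3.7, case (iii): sparsity-preserving structured backward error for
the GSPP with `E` Hermitian, `F ≠ H` general, `G` Hermitian. -/
theorem structured_BE_case_iii
    (n m : ℕ) (E : Matrix (Fin n) (Fin n) ℂ) (hE : E.IsHermitian)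
    (F H : Matrix (Fin m) (Fin n) ℂ) (G : Matrix (Fin m) (Fin m) ℂ) (hG : G.IsHermitian)
    (q : Fin n → ℂ) (r : Fin m → ℂ) (uh : Fin n → ℂ) (ph : Fin m → ℂ)
    (α₁ α₂ α₃ α₄ β₁ β₂ : ℝ)
    (hα₁ : 0 < α₁) (hα₂ : 0 < α₂) (hα₃ : 0 < α₃) (hα₄ : 0 < α₄)
    (hβ₁ : 0 < β₁) (hβ₂ : 0 < β₂) :
    let Q : Fin n → ℂ := q - E *ᵥ uh - Fᴴ *ᵥ ph
    let R : Fin m → ℂ := r - H *ᵥ uh - G *ᵥ ph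
    let N₁ := JS n * Phi E * (DS n)⁻¹
    let N₂ := JSK n * Psi E * (DSK n)⁻¹
    let S₁ := JS m * Phi G * (DS m)⁻¹
    let S₂ := JSK m * Psi G * (DSK m)⁻¹
    let M₁ : Matrix (Fin n ⊕ Fin n)
        (((SymIdx n ⊕ SkewIdx n) ⊕ ((Fin n × Fin m) ⊕ (Fin n × Fin m))) ⊕
          (((Fin n × Fin m) ⊕ (Fin n × Fin m)) ⊕ (SymIdx m ⊕ SkewIdx m))) ℝ :=
      fromCols
        (fromRows
          (fromCols
            (fromCols (α₁⁻¹ • (rowKronId (reV uh) * N₁))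
              ((-(α₁⁻¹)) • (rowKronId (imV uh) * N₂)))
            (fromCols (α₂⁻¹ • (idKronRow (reV ph) * Sig F))
              (α₂⁻¹ • (idKronRow (imV ph) * Sig F))))
          (fromCols
            (fromCols (α₁⁻¹ • (rowKronId (imV uh) * N₁))
              (α₁⁻¹ • (rowKronId (reV uh) * N₂)))
            (fromCols (α₂⁻¹ • (idKronRow (imV ph) * Sig F))
              ((-(α₂⁻¹)) • (idKronRow (reV ph) * Sig F)))))
        0
    let M₂ : Matrix (Fin m ⊕ Fin m)
        (((SymIdx n ⊕ SkewIdx n) ⊕ ((Fin n × Fin m) ⊕ (Fin n × Fin m))) ⊕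
          (((Fin n × Fin m) ⊕ (Fin n × Fin m)) ⊕ (SymIdx m ⊕ SkewIdx m))) ℝ :=
      fromCols 0
        (fromRows
          (fromCols
            (fromCols (α₃⁻¹ • (rowKronId (reV uh) * Sig H))
              ((-(α₃⁻¹)) • (rowKronId (imV uh) * Sig H)))
            (fromCols (α₄⁻¹ • (rowKronId (reV ph) * S₁))
              ((-(α₄⁻¹)) • (rowKronId (imV ph) * S₂))))
          (fromCols
            (fromCols (α₃⁻¹ • (rowKronId (imV uh) * Sig H))
              (α₃⁻¹ • (rowKronId (reV uh) * Sig H)))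
            (fromCols (α₄⁻¹ • (rowKronId (imV ph) * S₁))
              (α₄⁻¹ • (rowKronId (reV ph) * S₂)))))
    let I₁ : Matrix (Fin n ⊕ Fin n) ((Fin n ⊕ Fin n) ⊕ (Fin m ⊕ Fin m)) ℝ :=
      fromCols ((-(β₁⁻¹)) • (1 : Matrix (Fin n ⊕ Fin n) (Fin n ⊕ Fin n) ℝ)) 0
    let I₂ : Matrix (Fin m ⊕ Fin m) ((Fin n ⊕ Fin n) ⊕ (Fin m ⊕ Fin m)) ℝ :=
      fromCols 0 ((-(β₂⁻¹)) • (1 : Matrix (Fin m ⊕ Fin m) (Fin m ⊕ Fin m) ℝ))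
    let M := fromBlocks M₁ I₁ M₂ I₂
    let w : (Fin n ⊕ Fin n) ⊕ (Fin m ⊕ Fin m) → ℝ :=
      Sum.elim (Sum.elim (reV Q) (imV Q)) (Sum.elim (reV R) (imV R))
    IsUnit (M * Mᵀ) ∧
      IsLeast
        {t : ℝ | ∃ (ΔE : Matrix (Fin n) (Fin n) ℂ) (ΔF ΔH : Matrix (Fin m) (Fin n) ℂ)
            (ΔG : Matrix (Fin m) (Fin m) ℂ) (Δq : Fin n → ℂ) (Δr : Fin m → ℂ),
            ΔE.IsHermitian ∧ ΔG.IsHermitian ∧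
            (E + ΔE.hadamard (theta E)) *ᵥ uh + (F + ΔF.hadamard (theta F))ᴴ *ᵥ ph = q + Δq ∧
            (H + ΔH.hadamard (theta H)) *ᵥ uh + (G + ΔG.hadamard (theta G)) *ᵥ ph = r + Δr ∧
            t = zeta2 α₁ α₂ α₃ α₄ β₁ β₂ (ΔE.hadamard (theta E)) (ΔF.hadamard (theta F))
                  (ΔH.hadamard (theta H)) (ΔG.hadamard (theta G)) Δq Δr}
        (eunorm ((Mᵀ * (M * Mᵀ)⁻¹) *ᵥ w)) := by
  intro Q R N₁ N₂ S₁ S₂ M₁ M₂ I₁ I₂ M w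
  have hMeq : M = bigM E F H G uh ph α₁ α₂ α₃ α₄ β₁ β₂ := rfl
  have hweq : w = Sum.elim (Sum.elim (reV Q) (imV Q)) (Sum.elim (reV R) (imV R)) := rfl
  have hQdef : Q = q - E *ᵥ uh - Fᴴ *ᵥ ph := rfl
  have hRdef : R = r - H *ᵥ uh - G *ᵥ ph := rfl
  have hα₁n : α₁ ≠ 0 := ne_of_gt hα₁
  have hα₂n : α₂ ≠ 0 := ne_of_gt hα₂
  have hα₃n : α₃ ≠ 0 := ne_of_gt hα₃
  have hα₄n : α₄ ≠ 0 := ne_of_gt hα₄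
  have hβ₁n : β₁ ≠ 0 := ne_of_gt hβ₁
  have hβ₂n : β₂ ≠ 0 := ne_of_gt hβ₂
  have hUnit : IsUnit (M * Mᵀ) := by
    rw [hMeq]
    exact bigM_isUnit E F H G uh ph α₁ α₂ α₃ α₄ β₁ β₂ hβ₁n hβ₂n
  have hΘE : ∀ i j, thetaR E i j = thetaR E j i := by
    intro i j
    have h : star (E i j) = E j i := congrFun (congrFun hE j) i
    simp only [thetaR, Matrix.of_apply, ← h, star_eq_zero]
  have hΘG : ∀ i j, thetaR G i j = thetaR G j i := by
    intro i j
    have h : star (G i j) = G j i := congrFun (congrFun hG j) i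
    simp only [thetaR, Matrix.of_apply, ← h, star_eq_zero]
  constructor
  · exact hUnit
  constructor
  · -- MEMBERSHIP
    set xs : (KIdx n m ⊕ LIdx n m) → ℝ := (Mᵀ * (M * Mᵀ)⁻¹) *ᵥ w with hxs
    have hsolve : M *ᵥ xs = w := least_norm_solves M hUnit w
    set y : LIdx n m → ℝ := (M * Mᵀ)⁻¹ *ᵥ w with hy
    have hxsy : xs = Mᵀ *ᵥ y := by rw [hxs, hy, Matrix.mulVec_mulVec]
    set xE1 : SymIdx n → ℝ := fun p => xs (Sum.inl (Sum.inl (Sum.inl (Sum.inl p)))) with hxE1d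
    set xE2 : SkewIdx n → ℝ := fun p => xs (Sum.inl (Sum.inl (Sum.inl (Sum.inr p)))) with hxE2d
    set xF1 : Fin n × Fin m → ℝ := fun v => xs (Sum.inl (Sum.inl (Sum.inr (Sum.inl v)))) with hxF1d
    set xF2 : Fin n × Fin m → ℝ := fun v => xs (Sum.inl (Sum.inl (Sum.inr (Sum.inr v)))) with hxF2d
    set xH1 : Fin n × Fin m → ℝ := fun v => xs (Sum.inl (Sum.inr (Sum.inl (Sum.inl v)))) with hxH1d
    set xH2 : Fin n × Fin m → ℝ := fun v => xs (Sum.inl (Sum.inr (Sum.inl (Sum.inr v)))) with hxH2d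
    set xG1 : SymIdx m → ℝ := fun p => xs (Sum.inl (Sum.inr (Sum.inr (Sum.inl p)))) with hxG1d
    set xG2 : SkewIdx m → ℝ := fun p => xs (Sum.inl (Sum.inr (Sum.inr (Sum.inr p)))) with hxG2d
    set xq1 : Fin n → ℝ := fun k => xs (Sum.inr (Sum.inl (Sum.inl k))) with hxq1d
    set xq2 : Fin n → ℝ := fun k => xs (Sum.inr (Sum.inl (Sum.inr k))) with hxq2d
    set xr1 : Fin m → ℝ := fun k => xs (Sum.inr (Sum.inr (Sum.inl k))) with hxr1d
    set xr2 : Fin m → ℝ := fun k => xs (Sum.inr (Sum.inr (Sum.inr k))) with hxr2d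
    have hzE1 : ∀ p : SymIdx n, thetaR E p.1.1 p.1.2 = 0 → xE1 p = 0 := fun p hp => by
      show xs _ = 0
      rw [hxsy]
      exact transpose_mulVec_eq_zero M _
        (fun rr => hMeq ▸ bigM_colzero_E1 E F H G uh ph α₁ α₂ α₃ α₄ β₁ β₂ p hp rr) y
    have hzE2 : ∀ p : SkewIdx n, thetaR E p.1.1 p.1.2 = 0 → xE2 p = 0 := fun p hp => by
      show xs _ = 0
      rw [hxsy]
      exact transpose_mulVec_eq_zero M _
        (fun rr => hMeq ▸ bigM_colzero_E2 E F H G uh ph α₁ α₂ α₃ α₄ β₁ β₂ p hp rr) y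
    have hzF1 : ∀ v : Fin n × Fin m, thetaR F v.2 v.1 = 0 → xF1 v = 0 := fun v hp => by
      show xs _ = 0
      rw [hxsy]
      exact transpose_mulVec_eq_zero M _
        (fun rr => hMeq ▸ bigM_colzero_F1 E F H G uh ph α₁ α₂ α₃ α₄ β₁ β₂ v hp rr) y
    have hzF2 : ∀ v : Fin n × Fin m, thetaR F v.2 v.1 = 0 → xF2 v = 0 := fun v hp => by
      show xs _ = 0
      rw [hxsy]
      exact transpose_mulVec_eq_zero M _
        (fun rr => hMeq ▸ bigM_colzero_F2 E F H G uh ph α₁ α₂ α₃ α₄ β₁ β₂ v hp rr) y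
    have hzH1 : ∀ v : Fin n × Fin m, thetaR H v.2 v.1 = 0 → xH1 v = 0 := fun v hp => by
      show xs _ = 0
      rw [hxsy]
      exact transpose_mulVec_eq_zero M _
        (fun rr => hMeq ▸ bigM_colzero_H1 E F H G uh ph α₁ α₂ α₃ α₄ β₁ β₂ v hp rr) y
    have hzH2 : ∀ v : Fin n × Fin m, thetaR H v.2 v.1 = 0 → xH2 v = 0 := fun v hp => by
      show xs _ = 0
      rw [hxsy]
      exact transpose_mulVec_eq_zero M _
        (fun rr => hMeq ▸ bigM_colzero_H2 E F H G uh ph α₁ α₂ α₃ α₄ β₁ β₂ v hp rr) y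
    have hzG1 : ∀ p : SymIdx m, thetaR G p.1.1 p.1.2 = 0 → xG1 p = 0 := fun p hp => by
      show xs _ = 0
      rw [hxsy]
      exact transpose_mulVec_eq_zero M _
        (fun rr => hMeq ▸ bigM_colzero_G1 E F H G uh ph α₁ α₂ α₃ α₄ β₁ β₂ p hp rr) y
    have hzG2 : ∀ p : SkewIdx m, thetaR G p.1.1 p.1.2 = 0 → xG2 p = 0 := fun p hp => by
      show xs _ = 0
      rw [hxsy]
      exact transpose_mulVec_eq_zero M _
        (fun rr => hMeq ▸ bigM_colzero_G2 E F H G uh ph α₁ α₂ α₃ α₄ β₁ β₂ p hp rr) y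
    -- decoded matrices
    set aE : Matrix (Fin n) (Fin n) ℝ := Matrix.of fun i j =>
      α₁⁻¹ * (if h : j ≤ i then (if i = j then (1:ℝ) else Real.sqrt 2)⁻¹ * xE1 ⟨(i, j), h⟩
        else (if j = i then (1:ℝ) else Real.sqrt 2)⁻¹ * xE1 ⟨(j, i), le_of_not_ge h⟩) with haEd
    set bE : Matrix (Fin n) (Fin n) ℝ := Matrix.of fun i j =>
      α₁⁻¹ * (if h : j < i then (Real.sqrt 2)⁻¹ * xE2 ⟨(i, j), h⟩
        else if h' : i < j then -((Real.sqrt 2)⁻¹ * xE2 ⟨(j, i), h'⟩) else 0) with hbEd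
    set aG : Matrix (Fin m) (Fin m) ℝ := Matrix.of fun i j =>
      α₄⁻¹ * (if h : j ≤ i then (if i = j then (1:ℝ) else Real.sqrt 2)⁻¹ * xG1 ⟨(i, j), h⟩
        else (if j = i then (1:ℝ) else Real.sqrt 2)⁻¹ * xG1 ⟨(j, i), le_of_not_ge h⟩) with haGd
    set bG : Matrix (Fin m) (Fin m) ℝ := Matrix.of fun i j =>
      α₄⁻¹ * (if h : j < i then (Real.sqrt 2)⁻¹ * xG2 ⟨(i, j), h⟩
        else if h' : i < j then -((Real.sqrt 2)⁻¹ * xG2 ⟨(j, i), h'⟩) else 0) with hbGd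
    set aF : Matrix (Fin m) (Fin n) ℝ := Matrix.of fun i j => α₂⁻¹ * xF1 (j, i) with haFd
    set bF : Matrix (Fin m) (Fin n) ℝ := Matrix.of fun i j => α₂⁻¹ * xF2 (j, i) with hbFd
    set aH : Matrix (Fin m) (Fin n) ℝ := Matrix.of fun i j => α₃⁻¹ * xH1 (j, i) with haHd
    set bH : Matrix (Fin m) (Fin n) ℝ := Matrix.of fun i j => α₃⁻¹ * xH2 (j, i) with hbHd
    have haEsym : ∀ i j, aE i j = aE j i := by
      intro i j
      rw [haEd]
      simp only [Matrix.of_apply]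
      by_cases h1 : j ≤ i <;> by_cases h2 : i ≤ j
      · have : i = j := le_antisymm h2 h1
        subst this
        rfl
      · rw [dif_pos h1, dif_neg h2]
      · rw [dif_neg h1, dif_pos h2]
      · exact absurd (le_total j i) (by simp [h1, h2])
    have haGsym : ∀ i j, aG i j = aG j i := by
      intro i j
      rw [haGd]
      simp only [Matrix.of_apply]
      by_cases h1 : j ≤ i <;> by_cases h2 : i ≤ j
      · have : i = j := le_antisymm h2 h1
        subst this
        rfl
      · rw [dif_pos h1, dif_neg h2]
      · rw [dif_neg h1, dif_pos h2]
      · exact absurd (le_total j i) (by simp [h1, h2])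
    have hbEskew : ∀ i j, bE i j = - bE j i := by
      intro i j
      rw [hbEd]
      simp only [Matrix.of_apply]
      rcases lt_trichotomy j i with h | h | h
      · rw [dif_pos h, dif_neg (not_lt_of_gt h), dif_pos h]
        ring
      · subst h
        simp
      · rw [dif_neg (not_lt_of_gt h), dif_pos h, dif_pos h]
        ring
    have hbGskew : ∀ i j, bG i j = - bG j i := by
      intro i j
      rw [hbGd]
      simp only [Matrix.of_apply]
      rcases lt_trichotomy j i with h | h | h
      · rw [dif_pos h, dif_neg (not_lt_of_gt h), dif_pos h]
        ring
      · subst h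
        simp
      · rw [dif_neg (not_lt_of_gt h), dif_pos h, dif_pos h]
        ring
    set ΔE : Matrix (Fin n) (Fin n) ℂ :=
      Matrix.of fun i j => (aE i j : ℂ) + (bE i j : ℂ) * Complex.I with hΔEd
    set ΔG : Matrix (Fin m) (Fin m) ℂ :=
      Matrix.of fun i j => (aG i j : ℂ) + (bG i j : ℂ) * Complex.I with hΔGd
    set ΔF : Matrix (Fin m) (Fin n) ℂ :=
      Matrix.of fun i j => (aF i j : ℂ) + (bF i j : ℂ) * Complex.I with hΔFd
    set ΔH : Matrix (Fin m) (Fin n) ℂ :=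
      Matrix.of fun i j => (aH i j : ℂ) + (bH i j : ℂ) * Complex.I with hΔHd
    set dqC : Fin n → ℂ :=
      fun k => ((β₁⁻¹ * xq1 k : ℝ) : ℂ) + ((β₁⁻¹ * xq2 k : ℝ) : ℂ) * Complex.I with hdqCd
    set drC : Fin m → ℂ :=
      fun k => ((β₂⁻¹ * xr1 k : ℝ) : ℂ) + ((β₂⁻¹ * xr2 k : ℝ) : ℂ) * Complex.I with hdrCd
    have hΔEherm : ΔE.IsHermitian := by
      rw [hΔEd]; exact herm_of_re_im aE bE haEsym hbEskew
    have hΔGherm : ΔG.IsHermitian := by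
      rw [hΔGd]; exact herm_of_re_im aG bG haGsym hbGskew
    have hreE' : ∀ i j, reM (ΔE.hadamard (theta E)) i j = aE i j * thetaR E i j := by
      intro i j
      rw [reM_hadamard_theta, hΔEd, reM_mk]
    have himE' : ∀ i j, imM (ΔE.hadamard (theta E)) i j = bE i j * thetaR E i j := by
      intro i j
      rw [imM_hadamard_theta, hΔEd, imM_mk]
    have hreG' : ∀ i j, reM (ΔG.hadamard (theta G)) i j = aG i j * thetaR G i j := by
      intro i j
      rw [reM_hadamard_theta, hΔGd, reM_mk]
    have himG' : ∀ i j, imM (ΔG.hadamard (theta G)) i j = bG i j * thetaR G i j := by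
      intro i j
      rw [imM_hadamard_theta, hΔGd, imM_mk]
    have hreF' : ∀ i j, reM (ΔF.hadamard (theta F)) i j = α₂⁻¹ * xF1 (j, i) * thetaR F i j := by
      intro i j
      rw [reM_hadamard_theta, hΔFd, reM_mk, haFd]
      rfl
    have himF' : ∀ i j, imM (ΔF.hadamard (theta F)) i j = α₂⁻¹ * xF2 (j, i) * thetaR F i j := by
      intro i j
      rw [imM_hadamard_theta, hΔFd, imM_mk, hbFd]
      rfl
    have hreH' : ∀ i j, reM (ΔH.hadamard (theta H)) i j = α₃⁻¹ * xH1 (j, i) * thetaR H i j := by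
      intro i j
      rw [reM_hadamard_theta, hΔHd, reM_mk, haHd]
      rfl
    have himH' : ∀ i j, imM (ΔH.hadamard (theta H)) i j = α₃⁻¹ * xH2 (j, i) * thetaR H i j := by
      intro i j
      rw [imM_hadamard_theta, hΔHd, imM_mk, hbHd]
      rfl
    -- link equations
    have hlinkE1 : ∀ p : SymIdx n, thetaR E p.1.1 p.1.2 * xE1 p
        = (if p.1.1 = p.1.2 then (1:ℝ) else Real.sqrt 2)
            * (α₁ • reM (ΔE.hadamard (theta E))) p.1.1 p.1.2 := by
      rintro ⟨⟨i, j⟩, hji⟩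
      simp only [Matrix.smul_apply, smul_eq_mul]
      rw [hreE' i j, haEd]
      simp only [Matrix.of_apply]
      rw [dif_pos hji]
      by_cases hd : (i : Fin n) = j <;>
        simp only [hd, if_true, if_false, eq_self_iff_true] <;>
        field_simp <;> ring
    have hlinkE2 : ∀ p : SkewIdx n, thetaR E p.1.1 p.1.2 * xE2 p
        = Real.sqrt 2 * (α₁ • imM (ΔE.hadamard (theta E))) p.1.1 p.1.2 := by
      rintro ⟨⟨i, j⟩, hji⟩
      simp only [Matrix.smul_apply, smul_eq_mul]
      rw [himE' i j, hbEd]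
      simp only [Matrix.of_apply]
      rw [dif_pos hji]
      field_simp
    have hlinkG1 : ∀ p : SymIdx m, thetaR G p.1.1 p.1.2 * xG1 p
        = (if p.1.1 = p.1.2 then (1:ℝ) else Real.sqrt 2)
            * (α₄ • reM (ΔG.hadamard (theta G))) p.1.1 p.1.2 := by
      rintro ⟨⟨i, j⟩, hji⟩
      simp only [Matrix.smul_apply, smul_eq_mul]
      rw [hreG' i j, haGd]
      simp only [Matrix.of_apply]
      rw [dif_pos hji]
      by_cases hd : (i : Fin m) = j <;>
        simp only [hd, if_true, if_false, eq_self_iff_true] <;>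
        field_simp <;> ring
    have hlinkG2 : ∀ p : SkewIdx m, thetaR G p.1.1 p.1.2 * xG2 p
        = Real.sqrt 2 * (α₄ • imM (ΔG.hadamard (theta G))) p.1.1 p.1.2 := by
      rintro ⟨⟨i, j⟩, hji⟩
      simp only [Matrix.smul_apply, smul_eq_mul]
      rw [himG' i j, hbGd]
      simp only [Matrix.of_apply]
      rw [dif_pos hji]
      field_simp
    have hlinkF1 : ∀ i j, thetaR F i j * xF1 (j, i)
        = (α₂ • reM (ΔF.hadamard (theta F))) i j := by
      intro i j
      simp only [Matrix.smul_apply, smul_eq_mul]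
      rw [hreF' i j]
      field_simp
    have hlinkF2 : ∀ i j, thetaR F i j * xF2 (j, i)
        = (α₂ • imM (ΔF.hadamard (theta F))) i j := by
      intro i j
      simp only [Matrix.smul_apply, smul_eq_mul]
      rw [himF' i j]
      field_simp
    have hlinkH1 : ∀ i j, thetaR H i j * xH1 (j, i)
        = (α₃ • reM (ΔH.hadamard (theta H))) i j := by
      intro i j
      simp only [Matrix.smul_apply, smul_eq_mul]
      rw [hreH' i j]
      field_simp
    have hlinkH2 : ∀ i j, thetaR H i j * xH2 (j, i)
        = (α₃ • imM (ΔH.hadamard (theta H))) i j := by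
      intro i j
      simp only [Matrix.smul_apply, smul_eq_mul]
      rw [himH' i j]
      field_simp
    -- symmetry of scaled matrices
    have hE'sym : ∀ i j, (α₁ • reM (ΔE.hadamard (theta E))) i j
        = (α₁ • reM (ΔE.hadamard (theta E))) j i := by
      intro i j
      simp only [Matrix.smul_apply, smul_eq_mul]
      rw [hreE' i j, hreE' j i, haEsym i j, hΘE i j]
    have hE'skew : ∀ i j, (α₁ • imM (ΔE.hadamard (theta E))) i j
        = - (α₁ • imM (ΔE.hadamard (theta E))) j i := by
      intro i j
      simp only [Matrix.smul_apply, smul_eq_mul]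
      rw [himE' i j, himE' j i, hbEskew i j, hΘE i j]
      ring
    have hG'sym : ∀ i j, (α₄ • reM (ΔG.hadamard (theta G))) i j
        = (α₄ • reM (ΔG.hadamard (theta G))) j i := by
      intro i j
      simp only [Matrix.smul_apply, smul_eq_mul]
      rw [hreG' i j, hreG' j i, haGsym i j, hΘG i j]
    have hG'skew : ∀ i j, (α₄ • imM (ΔG.hadamard (theta G))) i j
        = - (α₄ • imM (ΔG.hadamard (theta G))) j i := by
      intro i j
      simp only [Matrix.smul_apply, smul_eq_mul]
      rw [himG' i j, himG' j i, hbGskew i j, hΘG i j]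
      ring
    have hAE := N1_mulVec E xE1 (α₁ • reM (ΔE.hadamard (theta E))) hE'sym hlinkE1
    have hBE := N2_mulVec E xE2 (α₁ • imM (ΔE.hadamard (theta E))) hE'skew hlinkE2
    have hAG := N1_mulVec G xG1 (α₄ • reM (ΔG.hadamard (theta G))) hG'sym hlinkG1
    have hBG := N2_mulVec G xG2 (α₄ • imM (ΔG.hadamard (theta G))) hG'skew hlinkG2
    have hAF := Sig_mulVec F xF1 (α₂ • reM (ΔF.hadamard (theta F))) hlinkF1
    have hBF := Sig_mulVec F xF2 (α₂ • imM (ΔF.hadamard (theta F))) hlinkF2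
    have hAH := Sig_mulVec H xH1 (α₃ • reM (ΔH.hadamard (theta H))) hlinkH1
    have hBH := Sig_mulVec H xH2 (α₃ • imM (ΔH.hadamard (theta H))) hlinkH2
    have hxq1eq : xq1 = β₁ • reV dqC := by
      funext k
      rw [hdqCd, reV_mk]
      show xq1 k = β₁ * (β₁⁻¹ * xq1 k)
      rw [← mul_assoc, mul_inv_cancel₀ hβ₁n, one_mul]
    have hxq2eq : xq2 = β₁ • imV dqC := by
      funext k
      rw [hdqCd, imV_mk]
      show xq2 k = β₁ * (β₁⁻¹ * xq2 k)
      rw [← mul_assoc, mul_inv_cancel₀ hβ₁n, one_mul]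
    have hxr1eq : xr1 = β₂ • reV drC := by
      funext k
      rw [hdrCd, reV_mk]
      show xr1 k = β₂ * (β₂⁻¹ * xr1 k)
      rw [← mul_assoc, mul_inv_cancel₀ hβ₂n, one_mul]
    have hxr2eq : xr2 = β₂ • imV drC := by
      funext k
      rw [hdrCd, imV_mk]
      show xr2 k = β₂ * (β₂⁻¹ * xr2 k)
      rw [← mul_assoc, mul_inv_cancel₀ hβ₂n, one_mul]
    have hxfull : Sum.elim (Sum.elim (Sum.elim (Sum.elim xE1 xE2) (Sum.elim xF1 xF2))
        (Sum.elim (Sum.elim xH1 xH2) (Sum.elim xG1 xG2)))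
        (Sum.elim (Sum.elim (β₁ • reV dqC) (β₁ • imV dqC))
          (Sum.elim (β₂ • reV drC) (β₂ • imV drC))) = xs := by
      rw [← hxq1eq, ← hxq2eq, ← hxr1eq, ← hxr2eq]
      funext i
      rcases i with ((((p | p) | (p | p)) | ((p | p) | (p | p))) | ((p | p) | (p | p))) <;> rfl
    have hbig := bigM_full E F H G uh ph hα₁n hα₂n hα₃n hα₄n hβ₁n hβ₂n
      (ΔE.hadamard (theta E)) (ΔF.hadamard (theta F)) (ΔH.hadamard (theta H))
      (ΔG.hadamard (theta G)) dqC drC xE1 xE2 xF1 xF2 xH1 xH2 xG1 xG2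
      hAE hBE hAF hBF hAH hBH hAG hBG
    have hrows : Sum.elim
        (Sum.elim (reV (ΔE.hadamard (theta E) *ᵥ uh + (ΔF.hadamard (theta F))ᴴ *ᵥ ph - dqC))
          (imV (ΔE.hadamard (theta E) *ᵥ uh + (ΔF.hadamard (theta F))ᴴ *ᵥ ph - dqC)))
        (Sum.elim (reV (ΔH.hadamard (theta H) *ᵥ uh + ΔG.hadamard (theta G) *ᵥ ph - drC))
          (imV (ΔH.hadamard (theta H) *ᵥ uh + ΔG.hadamard (theta G) *ᵥ ph - drC)))
        = Sum.elim (Sum.elim (reV Q) (imV Q)) (Sum.elim (reV R) (imV R)) := by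
      rw [← hbig, hxfull, ← hMeq, hsolve, hweq]
    rw [sum_elim_eq_iff] at hrows
    obtain ⟨h12, h34⟩ := hrows
    rw [sum_elim_eq_iff] at h12 h34
    obtain ⟨e1, e2⟩ := h12
    obtain ⟨e3, e4⟩ := h34
    have hc1C : ΔE.hadamard (theta E) *ᵥ uh + (ΔF.hadamard (theta F))ᴴ *ᵥ ph - dqC = Q :=
      (cvec_eq_iff _ _).mpr ⟨e1, e2⟩
    have hc2C : ΔH.hadamard (theta H) *ᵥ uh + ΔG.hadamard (theta G) *ᵥ ph - drC = R :=
      (cvec_eq_iff _ _).mpr ⟨e3, e4⟩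
    have hfeas1 : (E + ΔE.hadamard (theta E)) *ᵥ uh
        + (F + ΔF.hadamard (theta F))ᴴ *ᵥ ph = q + dqC := by
      rw [Matrix.conjTranspose_add, feas_shift]
      rw [hQdef] at hc1C
      exact hc1C
    have hfeas2 : (H + ΔH.hadamard (theta H)) *ᵥ uh
        + (G + ΔG.hadamard (theta G)) *ᵥ ph = r + drC := by
      rw [feas_shift]
      rw [hRdef] at hc2C
      exact hc2C
    have hE'1 : ∀ i j, reM (ΔE.hadamard (theta E)) i j = reM (ΔE.hadamard (theta E)) j i := by
      intro i j
      rw [hreE' i j, hreE' j i, haEsym i j, hΘE i j]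
    have hE'2 : ∀ i j, imM (ΔE.hadamard (theta E)) i j = - imM (ΔE.hadamard (theta E)) j i := by
      intro i j
      rw [himE' i j, himE' j i, hbEskew i j, hΘE i j]
      ring
    have hG'1 : ∀ i j, reM (ΔG.hadamard (theta G)) i j = reM (ΔG.hadamard (theta G)) j i := by
      intro i j
      rw [hreG' i j, hreG' j i, haGsym i j, hΘG i j]
    have hG'2 : ∀ i j, imM (ΔG.hadamard (theta G)) i j = - imM (ΔG.hadamard (theta G)) j i := by
      intro i j
      rw [himG' i j, himG' j i, hbGskew i j, hΘG i j]
      ring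
    have hsqE1 : ∀ p : SymIdx n, xE1 p ^ 2 = ((if p.1.1 = p.1.2 then (1:ℝ) else Real.sqrt 2)
        * (α₁ • reM (ΔE.hadamard (theta E))) p.1.1 p.1.2) ^ 2 := by
      intro p
      rw [← hlinkE1 p]
      rcases thetaR_cases E p.1.1 p.1.2 with h0 | h1
      · rw [h0, hzE1 p h0]
        norm_num
      · rw [h1, one_mul]
    have hsqE2 : ∀ p : SkewIdx n, xE2 p ^ 2
        = (Real.sqrt 2 * (α₁ • imM (ΔE.hadamard (theta E))) p.1.1 p.1.2) ^ 2 := by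
      intro p
      rw [← hlinkE2 p]
      rcases thetaR_cases E p.1.1 p.1.2 with h0 | h1
      · rw [h0, hzE2 p h0]
        norm_num
      · rw [h1, one_mul]
    have hsqG1 : ∀ p : SymIdx m, xG1 p ^ 2 = ((if p.1.1 = p.1.2 then (1:ℝ) else Real.sqrt 2)
        * (α₄ • reM (ΔG.hadamard (theta G))) p.1.1 p.1.2) ^ 2 := by
      intro p
      rw [← hlinkG1 p]
      rcases thetaR_cases G p.1.1 p.1.2 with h0 | h1
      · rw [h0, hzG1 p h0]
        norm_num
      · rw [h1, one_mul]
    have hsqG2 : ∀ p : SkewIdx m, xG2 p ^ 2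
        = (Real.sqrt 2 * (α₄ • imM (ΔG.hadamard (theta G))) p.1.1 p.1.2) ^ 2 := by
      intro p
      rw [← hlinkG2 p]
      rcases thetaR_cases G p.1.1 p.1.2 with h0 | h1
      · rw [h0, hzG2 p h0]
        norm_num
      · rw [h1, one_mul]
    have hsqF1 : ∀ v : Fin n × Fin m, xF1 v ^ 2
        = ((α₂ • reM (ΔF.hadamard (theta F))) v.2 v.1) ^ 2 := by
      rintro ⟨a, b⟩
      show xF1 (a, b) ^ 2 = ((α₂ • reM (ΔF.hadamard (theta F))) b a) ^ 2
      rw [← hlinkF1 b a]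
      rcases thetaR_cases F b a with h0 | h1
      · rw [h0, hzF1 (a, b) h0]
        norm_num
      · rw [h1, one_mul]
    have hsqF2 : ∀ v : Fin n × Fin m, xF2 v ^ 2
        = ((α₂ • imM (ΔF.hadamard (theta F))) v.2 v.1) ^ 2 := by
      rintro ⟨a, b⟩
      show xF2 (a, b) ^ 2 = ((α₂ • imM (ΔF.hadamard (theta F))) b a) ^ 2
      rw [← hlinkF2 b a]
      rcases thetaR_cases F b a with h0 | h1
      · rw [h0, hzF2 (a, b) h0]
        norm_num
      · rw [h1, one_mul]
    have hsqH1 : ∀ v : Fin n × Fin m, xH1 v ^ 2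
        = ((α₃ • reM (ΔH.hadamard (theta H))) v.2 v.1) ^ 2 := by
      rintro ⟨a, b⟩
      show xH1 (a, b) ^ 2 = ((α₃ • reM (ΔH.hadamard (theta H))) b a) ^ 2
      rw [← hlinkH1 b a]
      rcases thetaR_cases H b a with h0 | h1
      · rw [h0, hzH1 (a, b) h0]
        norm_num
      · rw [h1, one_mul]
    have hsqH2 : ∀ v : Fin n × Fin m, xH2 v ^ 2
        = ((α₃ • imM (ΔH.hadamard (theta H))) v.2 v.1) ^ 2 := by
      rintro ⟨a, b⟩
      show xH2 (a, b) ^ 2 = ((α₃ • imM (ΔH.hadamard (theta H))) b a) ^ 2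
      rw [← hlinkH2 b a]
      rcases thetaR_cases H b a with h0 | h1
      · rw [h0, hzH2 (a, b) h0]
        norm_num
      · rw [h1, one_mul]
    have hnorm : zeta2 α₁ α₂ α₃ α₄ β₁ β₂ (ΔE.hadamard (theta E)) (ΔF.hadamard (theta F))
        (ΔH.hadamard (theta H)) (ΔG.hadamard (theta G)) dqC drC = eunorm xs := by
      rw [← hxfull]
      exact zeta2_eq_eunorm (ΔE.hadamard (theta E)) (ΔF.hadamard (theta F))
        (ΔH.hadamard (theta H)) (ΔG.hadamard (theta G)) dqC drC
        xE1 xE2 xF1 xF2 xH1 xH2 xG1 xG2 hE'1 hE'2 hG'1 hG'2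
        hsqE1 hsqE2 hsqF1 hsqF2 hsqH1 hsqH2 hsqG1 hsqG2
    exact ⟨ΔE, ΔF, ΔH, ΔG, dqC, drC, hΔEherm, hΔGherm, hfeas1, hfeas2, hnorm.symm⟩
  · -- LOWER BOUND
    rintro t ⟨ΔE, ΔF, ΔH, ΔG, dq, dr, hΔEherm, hΔGherm, hc1, hc2, ht⟩
    set xE1 : SymIdx n → ℝ := fun p => (if p.1.1 = p.1.2 then (1:ℝ) else Real.sqrt 2)
      * (α₁ • reM (ΔE.hadamard (theta E))) p.1.1 p.1.2 with hxE1d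
    set xE2 : SkewIdx n → ℝ := fun p =>
      Real.sqrt 2 * (α₁ • imM (ΔE.hadamard (theta E))) p.1.1 p.1.2 with hxE2d
    set xF1 : Fin n × Fin m → ℝ := fun v => (α₂ • reM (ΔF.hadamard (theta F))) v.2 v.1 with hxF1d
    set xF2 : Fin n × Fin m → ℝ := fun v => (α₂ • imM (ΔF.hadamard (theta F))) v.2 v.1 with hxF2d
    set xH1 : Fin n × Fin m → ℝ := fun v => (α₃ • reM (ΔH.hadamard (theta H))) v.2 v.1 with hxH1d
    set xH2 : Fin n × Fin m → ℝ := fun v => (α₃ • imM (ΔH.hadamard (theta H))) v.2 v.1 with hxH2d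
    set xG1 : SymIdx m → ℝ := fun p => (if p.1.1 = p.1.2 then (1:ℝ) else Real.sqrt 2)
      * (α₄ • reM (ΔG.hadamard (theta G))) p.1.1 p.1.2 with hxG1d
    set xG2 : SkewIdx m → ℝ := fun p =>
      Real.sqrt 2 * (α₄ • imM (ΔG.hadamard (theta G))) p.1.1 p.1.2 with hxG2d
    have hE'1 : ∀ i j, reM (ΔE.hadamard (theta E)) i j = reM (ΔE.hadamard (theta E)) j i := by
      intro i j
      rw [reM_hadamard_theta, reM_hadamard_theta, reM_symm_of_herm hΔEherm i j, hΘE i j]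
    have hE'2 : ∀ i j, imM (ΔE.hadamard (theta E)) i j = - imM (ΔE.hadamard (theta E)) j i := by
      intro i j
      rw [imM_hadamard_theta, imM_hadamard_theta, imM_skew_of_herm hΔEherm i j, hΘE i j]
      ring
    have hG'1 : ∀ i j, reM (ΔG.hadamard (theta G)) i j = reM (ΔG.hadamard (theta G)) j i := by
      intro i j
      rw [reM_hadamard_theta, reM_hadamard_theta, reM_symm_of_herm hΔGherm i j, hΘG i j]
    have hG'2 : ∀ i j, imM (ΔG.hadamard (theta G)) i j = - imM (ΔG.hadamard (theta G)) j i := by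
      intro i j
      rw [imM_hadamard_theta, imM_hadamard_theta, imM_skew_of_herm hΔGherm i j, hΘG i j]
      ring
    have hlinkE1 : ∀ p : SymIdx n, thetaR E p.1.1 p.1.2 * xE1 p
        = (if p.1.1 = p.1.2 then (1:ℝ) else Real.sqrt 2)
            * (α₁ • reM (ΔE.hadamard (theta E))) p.1.1 p.1.2 := by
      intro p
      rw [hxE1d]
      simp only [Matrix.smul_apply, smul_eq_mul, reM_hadamard_theta]
      have h2 := thetaR_mul_self E p.1.1 p.1.2
      linear_combination ((if p.1.1 = p.1.2 then (1:ℝ) else Real.sqrt 2) * α₁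
        * reM ΔE p.1.1 p.1.2) * h2
    have hlinkE2 : ∀ p : SkewIdx n, thetaR E p.1.1 p.1.2 * xE2 p
        = Real.sqrt 2 * (α₁ • imM (ΔE.hadamard (theta E))) p.1.1 p.1.2 := by
      intro p
      rw [hxE2d]
      simp only [Matrix.smul_apply, smul_eq_mul, imM_hadamard_theta]
      have h2 := thetaR_mul_self E p.1.1 p.1.2
      linear_combination (Real.sqrt 2 * α₁ * imM ΔE p.1.1 p.1.2) * h2
    have hlinkG1 : ∀ p : SymIdx m, thetaR G p.1.1 p.1.2 * xG1 p
        = (if p.1.1 = p.1.2 then (1:ℝ) else Real.sqrt 2)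
            * (α₄ • reM (ΔG.hadamard (theta G))) p.1.1 p.1.2 := by
      intro p
      rw [hxG1d]
      simp only [Matrix.smul_apply, smul_eq_mul, reM_hadamard_theta]
      have h2 := thetaR_mul_self G p.1.1 p.1.2
      linear_combination ((if p.1.1 = p.1.2 then (1:ℝ) else Real.sqrt 2) * α₄
        * reM ΔG p.1.1 p.1.2) * h2
    have hlinkG2 : ∀ p : SkewIdx m, thetaR G p.1.1 p.1.2 * xG2 p
        = Real.sqrt 2 * (α₄ • imM (ΔG.hadamard (theta G))) p.1.1 p.1.2 := by
      intro p
      rw [hxG2d]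
      simp only [Matrix.smul_apply, smul_eq_mul, imM_hadamard_theta]
      have h2 := thetaR_mul_self G p.1.1 p.1.2
      linear_combination (Real.sqrt 2 * α₄ * imM ΔG p.1.1 p.1.2) * h2
    have hlinkF1 : ∀ i j, thetaR F i j * xF1 (j, i)
        = (α₂ • reM (ΔF.hadamard (theta F))) i j := by
      intro i j
      rw [hxF1d]
      simp only [Matrix.smul_apply, smul_eq_mul, reM_hadamard_theta]
      have h2 := thetaR_mul_self F i j
      linear_combination (α₂ * reM ΔF i j) * h2
    have hlinkF2 : ∀ i j, thetaR F i j * xF2 (j, i)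
        = (α₂ • imM (ΔF.hadamard (theta F))) i j := by
      intro i j
      rw [hxF2d]
      simp only [Matrix.smul_apply, smul_eq_mul, imM_hadamard_theta]
      have h2 := thetaR_mul_self F i j
      linear_combination (α₂ * imM ΔF i j) * h2
    have hlinkH1 : ∀ i j, thetaR H i j * xH1 (j, i)
        = (α₃ • reM (ΔH.hadamard (theta H))) i j := by
      intro i j
      rw [hxH1d]
      simp only [Matrix.smul_apply, smul_eq_mul, reM_hadamard_theta]
      have h2 := thetaR_mul_self H i j
      linear_combination (α₃ * reM ΔH i j) * h2
    have hlinkH2 : ∀ i j, thetaR H i j * xH2 (j, i)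
        = (α₃ • imM (ΔH.hadamard (theta H))) i j := by
      intro i j
      rw [hxH2d]
      simp only [Matrix.smul_apply, smul_eq_mul, imM_hadamard_theta]
      have h2 := thetaR_mul_self H i j
      linear_combination (α₃ * imM ΔH i j) * h2
    have hE'sym : ∀ i j, (α₁ • reM (ΔE.hadamard (theta E))) i j
        = (α₁ • reM (ΔE.hadamard (theta E))) j i := by
      intro i j
      simp only [Matrix.smul_apply, smul_eq_mul]
      rw [hE'1 i j]
    have hE'skew : ∀ i j, (α₁ • imM (ΔE.hadamard (theta E))) i j
        = - (α₁ • imM (ΔE.hadamard (theta E))) j i := by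
      intro i j
      simp only [Matrix.smul_apply, smul_eq_mul]
      rw [hE'2 i j]
      ring
    have hG'sym : ∀ i j, (α₄ • reM (ΔG.hadamard (theta G))) i j
        = (α₄ • reM (ΔG.hadamard (theta G))) j i := by
      intro i j
      simp only [Matrix.smul_apply, smul_eq_mul]
      rw [hG'1 i j]
    have hG'skew : ∀ i j, (α₄ • imM (ΔG.hadamard (theta G))) i j
        = - (α₄ • imM (ΔG.hadamard (theta G))) j i := by
      intro i j
      simp only [Matrix.smul_apply, smul_eq_mul]
      rw [hG'2 i j]
      ring
    have hAE := N1_mulVec E xE1 (α₁ • reM (ΔE.hadamard (theta E))) hE'sym hlinkE1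
    have hBE := N2_mulVec E xE2 (α₁ • imM (ΔE.hadamard (theta E))) hE'skew hlinkE2
    have hAG := N1_mulVec G xG1 (α₄ • reM (ΔG.hadamard (theta G))) hG'sym hlinkG1
    have hBG := N2_mulVec G xG2 (α₄ • imM (ΔG.hadamard (theta G))) hG'skew hlinkG2
    have hAF := Sig_mulVec F xF1 (α₂ • reM (ΔF.hadamard (theta F))) hlinkF1
    have hBF := Sig_mulVec F xF2 (α₂ • imM (ΔF.hadamard (theta F))) hlinkF2
    have hAH := Sig_mulVec H xH1 (α₃ • reM (ΔH.hadamard (theta H))) hlinkH1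
    have hBH := Sig_mulVec H xH2 (α₃ • imM (ΔH.hadamard (theta H))) hlinkH2
    have hbig := bigM_full E F H G uh ph hα₁n hα₂n hα₃n hα₄n hβ₁n hβ₂n
      (ΔE.hadamard (theta E)) (ΔF.hadamard (theta F)) (ΔH.hadamard (theta H))
      (ΔG.hadamard (theta G)) dq dr xE1 xE2 xF1 xF2 xH1 xH2 xG1 xG2
      hAE hBE hAF hBF hAH hBH hAG hBG
    have hc1C : ΔE.hadamard (theta E) *ᵥ uh + (ΔF.hadamard (theta F))ᴴ *ᵥ ph - dq = Q := by
      rw [hQdef]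
      rw [Matrix.conjTranspose_add] at hc1
      exact (feas_shift E (ΔE.hadamard (theta E)) Fᴴ (ΔF.hadamard (theta F))ᴴ uh ph q dq).mp hc1
    have hc2C : ΔH.hadamard (theta H) *ᵥ uh + ΔG.hadamard (theta G) *ᵥ ph - dr = R := by
      rw [hRdef]
      exact (feas_shift H (ΔH.hadamard (theta H)) G (ΔG.hadamard (theta G)) uh ph r dr).mp hc2
    have hsolve' : M *ᵥ Sum.elim (Sum.elim (Sum.elim (Sum.elim xE1 xE2) (Sum.elim xF1 xF2))
        (Sum.elim (Sum.elim xH1 xH2) (Sum.elim xG1 xG2)))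
        (Sum.elim (Sum.elim (β₁ • reV dq) (β₁ • imV dq))
          (Sum.elim (β₂ • reV dr) (β₂ • imV dr))) = w := by
      rw [hMeq, hbig, hc1C, hc2C, hweq]
    have hle := least_norm_le M hUnit w _ hsolve'
    have hnorm : zeta2 α₁ α₂ α₃ α₄ β₁ β₂ (ΔE.hadamard (theta E)) (ΔF.hadamard (theta F))
        (ΔH.hadamard (theta H)) (ΔG.hadamard (theta G)) dq dr
        = eunorm (Sum.elim (Sum.elim (Sum.elim (Sum.elim xE1 xE2) (Sum.elim xF1 xF2))
            (Sum.elim (Sum.elim xH1 xH2) (Sum.elim xG1 xG2)))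
            (Sum.elim (Sum.elim (β₁ • reV dq) (β₁ • imV dq))
              (Sum.elim (β₂ • reV dr) (β₂ • imV dr)))) :=
      zeta2_eq_eunorm (ΔE.hadamard (theta E)) (ΔF.hadamard (theta F))
        (ΔH.hadamard (theta H)) (ΔG.hadamard (theta G)) dq dr
        xE1 xE2 xF1 xF2 xH1 xH2 xG1 xG2 hE'1 hE'2 hG'1 hG'2
        (fun p => rfl) (fun p => rfl) (fun v => rfl) (fun v => rfl)
        (fun v => rfl) (fun v => rfl) (fun p => rfl) (fun p => rfl)
    rw [ht, hnorm]
    exact hle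

end GSPPBE
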